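/- arXiv:1609.05833 — 8 statements merged into one kernel-verified Lean document; each statement's English description precedes it below -/
import Mathlib

section
/- Let E be a real vector space, (W_i)_{i∈I} a nonempty family of wedges in E and (x_i)_{i∈I} elements of E. Suppose the set of multi-suprema of (x_i, W_i)_{i∈I} is nonempty. Then this set is a singleton if and only if ⋂_{i∈I} W_i is a cone, i.e., (⋂_{i∈I} W_i) ∩ (−⋂_{i∈I} W_i) = {0}. -/
/-- A wedge in a real vector space: a nonempty subset closed under addition
and multiplication by nonnegative scalars. -/
def IsWedge {E : Type*} [AddCommGroup E] [Module ℝ E] (W : Set E) : Prop :=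
  W.Nonempty ∧ (∀ x ∈ W, ∀ y ∈ W, x + y ∈ W) ∧ ∀ (c : ℝ), 0 ≤ c → ∀ x ∈ W, c • x ∈ W

/-- `u` is a multi-upper bound of the family `(x i, W i)`. -/
def IsMultiUpperBound {E ι : Type*} [AddCommGroup E] [Module ℝ E]
    (x : ι → E) (W : ι → Set E) (u : E) : Prop :=
  ∀ i, u - x i ∈ W i

/-- `z` is a multi-supremum of the family `(x i, W i)`. -/
def IsMultiSup {E ι : Type*} [AddCommGroup E] [Module ℝ E]
    (x : ι → E) (W : ι → Set E) (z : E) : Prop :=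
  IsMultiUpperBound x W z ∧ ∀ u, IsMultiUpperBound x W u → ∀ i, u - z ∈ W i

lemma wedge_zero_mem {E : Type*} [AddCommGroup E] [Module ℝ E] {W : Set E}
    (h : IsWedge W) : (0 : E) ∈ W := by
  obtain ⟨⟨w, hw⟩, _, hsmul⟩ := h
  simpa using hsmul 0 le_rfl w hw

theorem stmt_1 {E ι : Type*} [AddCommGroup E] [Module ℝ E] [Nonempty ι]
    (W : ι → Set E) (hW : ∀ i, IsWedge (W i)) (x : ι → E)
    (hne : {z | IsMultiSup x W z}.Nonempty) :
    (∃ z, {w | IsMultiSup x W w} = {z}) ↔ (⋂ i, W i) ∩ (-(⋂ i, W i)) = {0} := by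
  obtain ⟨z0, hz0⟩ := hne
  constructor
  · rintro ⟨z, hz⟩
    have hzsup : IsMultiSup x W z := by
      have : z ∈ ({z} : Set E) := rfl
      rw [← hz] at this; exact this
    ext v
    simp only [Set.mem_inter_iff, Set.mem_iInter, Set.mem_neg, Set.mem_singleton_iff]
    constructor
    · rintro ⟨hv, hv'⟩
      have hzv : IsMultiSup x W (z + v) := by
        constructor
        · intro i
          have := (hW i).2.1 _ (hzsup.1 i) _ (hv i)
          convert this using 1; abel
        · intro u hu i
          have := (hW i).2.1 _ (hzsup.2 u hu i) _ (hv' i)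
          convert this using 1; abel
      have : z + v = z := by
        have : z + v ∈ ({z} : Set E) := by rw [← hz]; exact hzv
        exact this
      have := congrArg (· - z) this
      simpa using this
    · rintro rfl
      refine ⟨fun i => wedge_zero_mem (hW i), fun i => by simpa using wedge_zero_mem (hW i)⟩
  · intro hcone
    refine ⟨z0, ?_⟩
    ext w
    simp only [Set.mem_setOf_eq, Set.mem_singleton_iff]
    constructor
    · intro hw
      have h1 : ∀ i, w - z0 ∈ W i := hz0.2 w hw.1
      have h2 : ∀ i, z0 - w ∈ W i := hw.2 z0 hz0.1
      have : w - z0 ∈ (⋂ i, W i) ∩ (-(⋂ i, W i)) := by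
        refine ⟨Set.mem_iInter.2 h1, Set.mem_neg.2 (Set.mem_iInter.2 fun i => ?_)⟩
        simpa using h2 i
      rw [hcone] at this
      have := Set.mem_singleton_iff.1 this
      have := sub_eq_zero.1 this
      exact this
    · rintro rfl; exact hz0
end

section
/- Let E be a real vector space, (W_i)_{i∈I} a nonempty family of wedges in E, (x_i)_{i∈I} elements of E, and z ∈ E. Then z is a multi-supremum of (x_i, W_i)_{i∈I} if and only if ⋂_{i∈I} (x_i + W_i) = z + ⋂_{i∈I} W_i (equality of subsets of E). -/
theorem stmt_4 {E ι : Type*} [AddCommGroup E] [Module ℝ E] [Nonempty ι]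
    (W : ι → Set E) (hW : ∀ i, IsWedge (W i)) (x : ι → E) (z : E) :
    IsMultiSup x W z ↔ (⋂ i, {w | w - x i ∈ W i}) = {w | w - z ∈ ⋂ i, W i} := by
  have hzero : ∀ i, (0:E) ∈ W i := fun i => by
    obtain ⟨⟨w, hw⟩, _, hs⟩ := hW i
    simpa using hs 0 le_rfl w hw
  constructor
  · rintro ⟨hub, hsup⟩
    ext u
    simp only [Set.mem_iInter, Set.mem_setOf_eq]
    constructor
    · intro h i
      exact hsup u h i
    · intro h i
      have := (hW i).2.1 _ (h i) _ (hub i)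
      simpa [sub_add_sub_cancel] using this
  · intro h
    have hz : z ∈ {w | w - z ∈ ⋂ i, W i} := by
      simp only [Set.mem_setOf_eq, sub_self, Set.mem_iInter]
      exact hzero
    rw [← h] at hz
    simp only [Set.mem_iInter, Set.mem_setOf_eq] at hz
    refine ⟨hz, fun u hu i => ?_⟩
    have : u ∈ ⋂ i, {w | w - x i ∈ W i} := by
      simp only [Set.mem_iInter, Set.mem_setOf_eq]; exact hu
    rw [h] at this
    exact Set.mem_iInter.1 this i
end

section
/- Let E be a real vector space and 𝒲 a nonempty collection of wedges in E that is closed under pairwise intersections (so that the intersection of any two wedges in 𝒲 again belongs to 𝒲). Suppose that every multi-bounded above family (x_1, W_1), (x_2, W_2) of two elements with W_1, W_2 ∈ 𝒲 has a multi-supremum. Then for every n ∈ ℕ, every multi-bounded above family (x_i, W_i)_{i=1,…,n} with all W_i ∈ 𝒲 has a multi-supremum. -/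
/-- Finite nonempty intersections of members of a family closed under pairwise
intersection again belong to the family. -/
lemma aux_inter_mem {E : Type*} (𝒲 : Set (Set E))
    (hinter : ∀ W₁ ∈ 𝒲, ∀ W₂ ∈ 𝒲, W₁ ∩ W₂ ∈ 𝒲) :
    ∀ (n : ℕ) (W : Fin (n + 1) → Set E), (∀ i, W i ∈ 𝒲) →
      ∃ V ∈ 𝒲, ∀ y, y ∈ V ↔ ∀ i, y ∈ W i := by
  intro n
  induction n with
  | zero =>
    intro W hW
    exact ⟨W 0, hW 0, fun y =>
      ⟨fun h i => by rwa [Fin.eq_zero i], fun h => h 0⟩⟩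
  | succ n ih =>
    intro W hW
    obtain ⟨V, hV𝒲, hV⟩ := ih (fun i => W i.castSucc) (fun i => hW _)
    refine ⟨V ∩ W (Fin.last _), hinter _ hV𝒲 _ (hW _), fun y => ⟨?_, ?_⟩⟩
    · rintro ⟨h1, h2⟩ i
      induction i using Fin.lastCases with
      | last => exact h2
      | cast j => exact (hV y).1 h1 j
    · intro h
      exact ⟨(hV y).2 fun j => h j.castSucc, h (Fin.last _)⟩

theorem stmt_5 {E : Type*} [AddCommGroup E] [Module ℝ E]
    (𝒲 : Set (Set E)) (h𝒲ne : 𝒲.Nonempty) (h𝒲 : ∀ W ∈ 𝒲, IsWedge W)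
    (hinter : ∀ W₁ ∈ 𝒲, ∀ W₂ ∈ 𝒲, W₁ ∩ W₂ ∈ 𝒲)
    (h2 : ∀ (x : Fin 2 → E) (W : Fin 2 → Set E), (∀ i, W i ∈ 𝒲) →
      (∃ u, IsMultiUpperBound x W u) → ∃ z, IsMultiSup x W z) :
    ∀ (n : ℕ) (x : Fin n → E) (W : Fin n → Set E), (∀ i, W i ∈ 𝒲) →
      (∃ u, IsMultiUpperBound x W u) → ∃ z, IsMultiSup x W z := by
  intro n
  induction n with
  | zero =>
    intro x W hW _
    exact ⟨0, fun i => i.elim0, fun u _ i => i.elim0⟩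
  | succ n ih =>
    intro x W hW hub
    obtain ⟨u, hu⟩ := hub
    rcases n with _ | m
    · -- one-element family: use h2 with the element duplicated
      obtain ⟨z, hz⟩ := h2 (fun _ => x 0) (fun _ => W 0) (fun _ => hW 0)
        ⟨u, fun _ => hu 0⟩
      refine ⟨z, fun i => ?_, fun u' hu' i => ?_⟩
      · rw [Fin.eq_zero i]; exact hz.1 0
      · rw [Fin.eq_zero i]; exact hz.2 u' (fun _ => hu' 0) 0
    · -- n = m + 2
      set x' : Fin (m + 1) → E := fun i => x i.castSucc with hx'
      set W' : Fin (m + 1) → Set E := fun i => W i.castSucc with hW'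
      obtain ⟨z, hz⟩ := ih x' W' (fun i => hW _) ⟨u, fun i => hu i.castSucc⟩
      obtain ⟨V, hV𝒲, hV⟩ := aux_inter_mem 𝒲 hinter m W' (fun i => hW _)
      -- the two-element family (z, V), (x last, W last)
      set x2 : Fin 2 → E := ![z, x (Fin.last _)] with hx2
      set W2 : Fin 2 → Set E := ![V, W (Fin.last _)] with hW2
      have hW2mem : ∀ i, W2 i ∈ 𝒲 := by
        intro i
        fin_cases i <;> simp [hW2, hV𝒲, hW _]
      have hub2 : ∀ v, IsMultiUpperBound x W v → IsMultiUpperBound x2 W2 v := by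
        intro v hv i
        have hvub' : IsMultiUpperBound x' W' v := fun j => hv j.castSucc
        fin_cases i
        · simpa [x2, W2] using (hV (v - z)).2 (fun j => hz.2 v hvub' j)
        · simpa [x2, W2] using hv (Fin.last _)
      obtain ⟨w, hw⟩ := h2 x2 W2 hW2mem ⟨u, hub2 u hu⟩
      have hwV : w - z ∈ V := by simpa [x2, W2] using hw.1 0
      refine ⟨w, fun i => ?_, fun u' hu' i => ?_⟩
      · induction i using Fin.lastCases with
        | last => simpa [x2, W2] using hw.1 1
        | cast j =>
          have h1 : w - z ∈ W' j := (hV (w - z)).1 hwV j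
          have h2' : z - x' j ∈ W' j := hz.1 j
          have := (h𝒲 _ (hW j.castSucc)).2.1 _ h1 _ h2'
          simpa [W', x', sub_add_sub_cancel] using this
      · have hpair := hw.2 u' (hub2 u' hu')
        induction i using Fin.lastCases with
        | last => simpa [x2, W2] using hpair 1
        | cast j =>
          have h0 : u' - w ∈ V := by simpa [x2, W2] using hpair 0
          exact (hV (u' - w)).1 h0 j
end

section
/- In E = ℝ², let W₁ = {(x,y) : x ≥ 0}, W₂ = {(x,y) : y ≥ 0} and W₃ = {(x,y) : y ≥ −x}. Then: (a) every multi-bounded above pair (x₁, U₁), (x₂, U₂) with U₁, U₂ ∈ {W₁, W₂, W₃} has a multi-supremum; but (b) the family ((0,0), W₁), ((0,0), W₂), ((1,1), W₃) is multi-bounded above and has no multi-supremum. -/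
/-- The right half-plane. -/
def Wone : Set (ℝ × ℝ) := {p | 0 ≤ p.1}

/-- The upper half-plane. -/
def Wtwo : Set (ℝ × ℝ) := {p | 0 ≤ p.2}

/-- The half-plane above the anti-diagonal. -/
def Wthree : Set (ℝ × ℝ) := {p | -p.1 ≤ p.2}

lemma multiSup_two (x : Fin 2 → ℝ × ℝ) (U : Fin 2 → Set (ℝ × ℝ)) (z : ℝ × ℝ)
    (h0 : z - x 0 ∈ U 0) (h1 : z - x 1 ∈ U 1)
    (h : ∀ u, u - x 0 ∈ U 0 → u - x 1 ∈ U 1 → (u - z ∈ U 0 ∧ u - z ∈ U 1)) :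
    IsMultiSup x U z := by
  refine ⟨?_, ?_⟩
  · intro i; fin_cases i; exacts [h0, h1]
  · intro u hu i
    have H := h u (hu 0) (hu 1)
    fin_cases i; exacts [H.1, H.2]

theorem stmt_6 :
    (∀ (x : Fin 2 → ℝ × ℝ) (U : Fin 2 → Set (ℝ × ℝ)),
      (∀ i, U i ∈ ({Wone, Wtwo, Wthree} : Set (Set (ℝ × ℝ)))) →
      (∃ u, IsMultiUpperBound x U u) → ∃ z, IsMultiSup x U z) ∧
    (∃ u, IsMultiUpperBound ![((0 : ℝ), (0 : ℝ)), (0, 0), (1, 1)] ![Wone, Wtwo, Wthree] u) ∧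
    ¬∃ z, IsMultiSup ![((0 : ℝ), (0 : ℝ)), (0, 0), (1, 1)] ![Wone, Wtwo, Wthree] z := by
  refine ⟨?_, ⟨(1, 1), ?_⟩, ?_⟩
  · intro x U hU _
    have h0 := hU 0
    have h1 := hU 1
    simp only [Set.mem_insert_iff, Set.mem_singleton_iff] at h0 h1
    rcases h0 with h0 | h0 | h0 <;> rcases h1 with h1 | h1 | h1
    · -- Wone, Wone
      refine ⟨(max (x 0).1 (x 1).1, 0), multiSup_two x U _ ?_ ?_ ?_⟩ <;>
        simp only [h0, h1, Wone, Wtwo, Wthree, Set.mem_setOf_eq, Prod.fst_sub, Prod.snd_sub]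
      · linarith [le_max_left (x 0).1 (x 1).1]
      · linarith [le_max_right (x 0).1 (x 1).1]
      · intro u hu0 hu1
        have : max (x 0).1 (x 1).1 ≤ u.1 := max_le (by linarith) (by linarith)
        constructor <;> linarith
    · -- Wone, Wtwo
      refine ⟨((x 0).1, (x 1).2), multiSup_two x U _ ?_ ?_ ?_⟩ <;>
        simp only [h0, h1, Wone, Wtwo, Wthree, Set.mem_setOf_eq, Prod.fst_sub, Prod.snd_sub]
      · linarith
      · linarith
      · intro u hu0 hu1; constructor <;> linarith
    · -- Wone, Wthree
      refine ⟨((x 0).1, (x 1).1 + (x 1).2 - (x 0).1), multiSup_two x U _ ?_ ?_ ?_⟩ <;>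
        simp only [h0, h1, Wone, Wtwo, Wthree, Set.mem_setOf_eq, Prod.fst_sub, Prod.snd_sub]
      · linarith
      · linarith
      · intro u hu0 hu1; constructor <;> linarith
    · -- Wtwo, Wone
      refine ⟨((x 1).1, (x 0).2), multiSup_two x U _ ?_ ?_ ?_⟩ <;>
        simp only [h0, h1, Wone, Wtwo, Wthree, Set.mem_setOf_eq, Prod.fst_sub, Prod.snd_sub]
      · linarith
      · linarith
      · intro u hu0 hu1; constructor <;> linarith
    · -- Wtwo, Wtwo
      refine ⟨(0, max (x 0).2 (x 1).2), multiSup_two x U _ ?_ ?_ ?_⟩ <;>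
        simp only [h0, h1, Wone, Wtwo, Wthree, Set.mem_setOf_eq, Prod.fst_sub, Prod.snd_sub]
      · linarith [le_max_left (x 0).2 (x 1).2]
      · linarith [le_max_right (x 0).2 (x 1).2]
      · intro u hu0 hu1
        have : max (x 0).2 (x 1).2 ≤ u.2 := max_le (by linarith) (by linarith)
        constructor <;> linarith
    · -- Wtwo, Wthree
      refine ⟨((x 1).1 + (x 1).2 - (x 0).2, (x 0).2), multiSup_two x U _ ?_ ?_ ?_⟩ <;>
        simp only [h0, h1, Wone, Wtwo, Wthree, Set.mem_setOf_eq, Prod.fst_sub, Prod.snd_sub]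
      · linarith
      · linarith
      · intro u hu0 hu1; constructor <;> linarith
    · -- Wthree, Wone
      refine ⟨((x 1).1, (x 0).1 + (x 0).2 - (x 1).1), multiSup_two x U _ ?_ ?_ ?_⟩ <;>
        simp only [h0, h1, Wone, Wtwo, Wthree, Set.mem_setOf_eq, Prod.fst_sub, Prod.snd_sub]
      · linarith
      · linarith
      · intro u hu0 hu1; constructor <;> linarith
    · -- Wthree, Wtwo
      refine ⟨((x 0).1 + (x 0).2 - (x 1).2, (x 1).2), multiSup_two x U _ ?_ ?_ ?_⟩ <;>
        simp only [h0, h1, Wone, Wtwo, Wthree, Set.mem_setOf_eq, Prod.fst_sub, Prod.snd_sub]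
      · linarith
      · linarith
      · intro u hu0 hu1; constructor <;> linarith
    · -- Wthree, Wthree
      refine ⟨(max ((x 0).1 + (x 0).2) ((x 1).1 + (x 1).2), 0), multiSup_two x U _ ?_ ?_ ?_⟩ <;>
        simp only [h0, h1, Wone, Wtwo, Wthree, Set.mem_setOf_eq, Prod.fst_sub, Prod.snd_sub]
      · linarith [le_max_left ((x 0).1 + (x 0).2) ((x 1).1 + (x 1).2)]
      · linarith [le_max_right ((x 0).1 + (x 0).2) ((x 1).1 + (x 1).2)]
      · intro u hu0 hu1
        have : max ((x 0).1 + (x 0).2) ((x 1).1 + (x 1).2) ≤ u.1 + u.2 :=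
          max_le (by linarith) (by linarith)
        constructor <;> linarith
  · intro i
    fin_cases i <;>
      norm_num [Wone, Wtwo, Wthree, Prod.sub_def, Set.mem_setOf_eq]
  · rintro ⟨z, hz⟩
    have ha0 := hz.1 0
    have ha1 := hz.1 1
    have ha2 := hz.1 2
    simp only [Matrix.cons_val_zero, Matrix.cons_val_one, Matrix.head_cons,
      Matrix.cons_val_two, Matrix.tail_cons, Wone, Wtwo, Wthree, Set.mem_setOf_eq,
      Prod.fst_sub, Prod.snd_sub] at ha0 ha1 ha2
    have hub1 : IsMultiUpperBound ![((0 : ℝ), (0 : ℝ)), (0, 0), (1, 1)] ![Wone, Wtwo, Wthree]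
        (2, 0) := by
      intro i
      fin_cases i <;> norm_num [Wone, Wtwo, Wthree, Prod.sub_def, Set.mem_setOf_eq]
    have hub2 : IsMultiUpperBound ![((0 : ℝ), (0 : ℝ)), (0, 0), (1, 1)] ![Wone, Wtwo, Wthree]
        (0, 2) := by
      intro i
      fin_cases i <;> norm_num [Wone, Wtwo, Wthree, Prod.sub_def, Set.mem_setOf_eq]
    have hc1 := hz.2 (2, 0) hub1 1
    have hc2 := hz.2 (0, 2) hub2 0
    simp only [Matrix.cons_val_zero, Matrix.cons_val_one, Matrix.head_cons,
      Wone, Wtwo, Set.mem_setOf_eq, Prod.fst_sub, Prod.snd_sub] at hc1 hc2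
    norm_num at hc1 hc2 ha0 ha1 ha2
    linarith
end

section
/- Let E and V be real vector spaces, W a wedge in E, and T : W → V a map that is additive (T(x + y) = T(x) + T(y) for all x, y ∈ W) and positively homogeneous (T(λ·x) = λ·T(x) for all x ∈ W and real λ ≥ 0). Then there exists a linear map S : E → V with S(x) = T(x) for all x ∈ W. -/
theorem stmt_11 {E V : Type*} [AddCommGroup E] [Module ℝ E] [AddCommGroup V] [Module ℝ V]
    (W : Set E) (hW : IsWedge W) (T : E → V)
    (hadd : ∀ x ∈ W, ∀ y ∈ W, T (x + y) = T x + T y)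
    (hpos : ∀ (c : ℝ), 0 ≤ c → ∀ x ∈ W, T (c • x) = c • T x) :
    ∃ S : E →ₗ[ℝ] V, ∀ x ∈ W, S x = T x := by
  classical
  obtain ⟨⟨w0, hw0⟩, haddW, hsmulW⟩ := hW
  have h0W : (0 : E) ∈ W := by
    have := hsmulW 0 le_rfl w0 hw0
    simpa using this
  have hT0 : T 0 = 0 := by
    have := hpos 0 le_rfl w0 hw0
    simpa using this
  -- well-definedness of differences
  have wd : ∀ x ∈ W, ∀ y ∈ W, ∀ x' ∈ W, ∀ y' ∈ W, x - y = x' - y' →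
      T x - T y = T x' - T y' := by
    intro x hx y hy x' hx' y' hy' h
    have he : x + y' = x' + y := by linear_combination (norm := abel) h
    have := hadd x hx y' hy'
    rw [he, hadd x' hx' y hy] at this
    rw [sub_eq_sub_iff_add_eq_add]
    exact this.symm
  -- the subspace W - W
  set p : Submodule ℝ E :=
    { carrier := {z | ∃ x ∈ W, ∃ y ∈ W, x - y = z}
      add_mem' := by
        rintro z w ⟨x, hx, y, hy, rfl⟩ ⟨x', hx', y', hy', rfl⟩
        exact ⟨x + x', haddW x hx x' hx', y + y', haddW y hy y' hy', by abel⟩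
      zero_mem' := ⟨0, h0W, 0, h0W, by simp⟩
      smul_mem' := by
        rintro c z ⟨x, hx, y, hy, rfl⟩
        rcases le_or_gt 0 c with hc | hc
        · exact ⟨c • x, hsmulW c hc x hx, c • y, hsmulW c hc y hy, by
            simp [smul_sub]⟩
        · refine ⟨(-c) • y, hsmulW (-c) (by linarith) y hy,
            (-c) • x, hsmulW (-c) (by linarith) x hx, ?_⟩
          simp [smul_sub, neg_smul]
          abel } with hp
  have hzp : ∀ z : p, ∃ x ∈ W, ∃ y ∈ W, x - y = (z : E) := fun z => z.2
  choose a ha b hb hab using hzp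
  let g : p →ₗ[ℝ] V :=
    { toFun := fun z => T (a z) - T (b z)
      map_add' := by
        intro z w
        have h1 : a z + a w ∈ W := haddW _ (ha z) _ (ha w)
        have h2 : b z + b w ∈ W := haddW _ (hb z) _ (hb w)
        have he : a (z + w) - b (z + w) = (a z + a w) - (b z + b w) := by
          rw [hab (z + w)]
          push_cast
          rw [← hab z, ← hab w]
          abel
        rw [wd _ (ha (z + w)) _ (hb (z + w)) _ h1 _ h2 he,
          hadd _ (ha z) _ (ha w), hadd _ (hb z) _ (hb w)]
        abel
      map_smul' := by
        intro c z
        dsimp only [RingHom.id_apply]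
        rcases le_or_gt 0 c with hc | hc
        · have h1 : c • a z ∈ W := hsmulW c hc _ (ha z)
          have h2 : c • b z ∈ W := hsmulW c hc _ (hb z)
          have he : a (c • z) - b (c • z) = c • a z - c • b z := by
            rw [hab (c • z)]
            push_cast
            rw [← hab z, smul_sub]
          rw [wd _ (ha (c • z)) _ (hb (c • z)) _ h1 _ h2 he,
            hpos c hc _ (ha z), hpos c hc _ (hb z)]
          simp [smul_sub]
        · have hc' : (0:ℝ) ≤ -c := by linarith
          have h1 : (-c) • b z ∈ W := hsmulW _ hc' _ (hb z)
          have h2 : (-c) • a z ∈ W := hsmulW _ hc' _ (ha z)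
          have he : a (c • z) - b (c • z) = (-c) • b z - (-c) • a z := by
            rw [hab (c • z)]
            push_cast
            rw [← hab z]
            simp [smul_sub, neg_smul]
            abel
          rw [wd _ (ha (c • z)) _ (hb (c • z)) _ h1 _ h2 he,
            hpos _ hc' _ (hb z), hpos _ hc' _ (ha z)]
          simp [smul_sub, neg_smul]
          abel }
  obtain ⟨q, hq⟩ := Submodule.exists_isCompl p
  refine ⟨g.comp (Submodule.linearProjOfIsCompl p q hq), ?_⟩
  intro x hx
  have hxp : x ∈ p := ⟨x, hx, 0, h0W, by simp⟩
  have hproj : Submodule.linearProjOfIsCompl p q hq x = ⟨x, hxp⟩ :=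
    Submodule.linearProjOfIsCompl_apply_left hq ⟨x, hxp⟩
  simp only [LinearMap.comp_apply, hproj]
  show T (a ⟨x, hxp⟩) - T (b ⟨x, hxp⟩) = T x
  have := wd _ (ha ⟨x, hxp⟩) _ (hb ⟨x, hxp⟩) x hx 0 h0W (by rw [hab ⟨x, hxp⟩]; simp)
  rw [this, hT0]
  abel
end

section
/- Let E be a real vector space with a nonempty collection 𝒲 of wedges having the (2,n)-Riesz decomposition property for every n ∈ ℕ. Let F be a real vector space with a wedge V such that every nonempty subset A of F admitting an element u with a ≤_V u for all a ∈ A has a multi-supremum with respect to the single wedge V. Then for every family (T_i)_{i∈I} of linear maps E → F and wedges (W_i)_{i∈I} in 𝒲 for which there exists a linear map S : E → F with (S − T_i)(W_i) ⊆ V for all i ∈ I, the family (T_i, L_{W_i,V}(E,F))_{i∈I} has a multi-supremum in L(E,F) with respect to the wedges L_{W_i,V}(E,F). -/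
/-- `∑_{i ∈ I} W i` : the set of all finite (nonempty) sums of elements of `⋃ i, W i`. -/
def wedgeSum {E ι : Type*} [AddCommGroup E] [Module ℝ E] (W : ι → Set E) : Set E :=
  {x | ∃ l : List E, l ≠ [] ∧ (∀ y ∈ l, y ∈ ⋃ i, W i) ∧ l.sum = x}

/-- The collection `𝒲` of wedges has the (2,n)-Riesz decomposition property for every
`n ∈ ℕ`: for every finite collection `(W j)` of wedges from `𝒲`, whenever
`x₁, x₂ ∈ ∑ j, W j` and `y j ∈ W j` satisfy `x₁ + x₂ = ∑ j, y j`, there is a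
decomposition `z₁ j, z₂ j ∈ W j` with `x₁ = ∑ j, z₁ j`, `x₂ = ∑ j, z₂ j` and
`y j = z₁ j + z₂ j` for all `j`. -/
def HasRDP2 {E : Type*} [AddCommGroup E] [Module ℝ E] (𝒲 : Set (Set E)) : Prop :=
  ∀ (n : ℕ) (W : Fin n → Set E), (∀ j, W j ∈ 𝒲) →
    ∀ x₁ x₂ : E, x₁ ∈ wedgeSum W → x₂ ∈ wedgeSum W →
    ∀ y : Fin n → E, (∀ j, y j ∈ W j) → x₁ + x₂ = ∑ j, y j →
    ∃ z₁ z₂ : Fin n → E, (∀ j, z₁ j ∈ W j) ∧ (∀ j, z₂ j ∈ W j) ∧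
      x₁ = ∑ j, z₁ j ∧ x₂ = ∑ j, z₂ j ∧ ∀ j, y j = z₁ j + z₂ j

section AuxLemmas

set_option linter.unusedSectionVars false

variable {E F ι : Type*} [AddCommGroup E] [Module ℝ E] [AddCommGroup F] [Module ℝ F]

lemma wedge_zero_mem_s14 {V : Set E} (hV : IsWedge V) : (0 : E) ∈ V := by
  obtain ⟨v, hv⟩ := hV.1
  simpa using hV.2.2 0 le_rfl v hv

lemma wedge_list_sum_mem {V : Set F} (hV : IsWedge V) :
    ∀ l : List F, (∀ y ∈ l, y ∈ V) → l.sum ∈ V := by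
  intro l
  induction l with
  | nil => intro _; simpa using wedge_zero_mem_s14 hV
  | cons a t ih =>
    intro h
    simp only [List.sum_cons]
    exact hV.2.1 a (h a (by simp)) t.sum (ih fun y hy => h y (by simp [hy]))

lemma list_sum_map_sub {α : Type*} (l : List α) (f g : α → F) :
    (l.map fun a => f a - g a).sum = (l.map f).sum - (l.map g).sum := by
  induction l with
  | nil => simp
  | cons a t ih => simp [ih]; abel

/-- The set of "representation values" `∑ T i_k w_k` over decompositions `x = ∑ w_k`,
`w_k ∈ W i_k`. -/
def repSet (T : ι → E →ₗ[ℝ] F) (W : ι → Set E) (x : E) : Set F :=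
  {f | ∃ l : List (ι × E), l ≠ [] ∧ (∀ p ∈ l, p.2 ∈ W p.1) ∧
    (l.map Prod.snd).sum = x ∧ (l.map fun p => T p.1 p.2).sum = f}

lemma repSet_single {T : ι → E →ₗ[ℝ] F} {W : ι → Set E} {i : ι} {w : E} (hw : w ∈ W i) :
    T i w ∈ repSet T W w :=
  ⟨[(i, w)], by simp, by simpa using hw, by simp, by simp⟩

lemma repSet_bound {T : ι → E →ₗ[ℝ] F} {W : ι → Set E} {V : Set F} (hV : IsWedge V)
    (U : E →ₗ[ℝ] F) (hU : ∀ i, ∀ w ∈ W i, U w - T i w ∈ V)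
    {x : E} {f : F} (hf : f ∈ repSet T W x) : U x - f ∈ V := by
  obtain ⟨l, -, hmem, hsx, hsf⟩ := hf
  have : U x - f = (l.map fun p => U p.2 - T p.1 p.2).sum := by
    rw [list_sum_map_sub l (fun p => U p.2) (fun p => T p.1 p.2), hsf, ← hsx,
      map_list_sum U, List.map_map]
    rfl
  rw [this]
  exact wedge_list_sum_mem hV _ (by
    intro y hy
    obtain ⟨p, hp, rfl⟩ := List.mem_map.1 hy
    exact hU p.1 p.2 (hmem p hp))

lemma repSet_add {T : ι → E →ₗ[ℝ] F} {W : ι → Set E} {x y : E} {f g : F}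
    (hf : f ∈ repSet T W x) (hg : g ∈ repSet T W y) : f + g ∈ repSet T W (x + y) := by
  obtain ⟨l₁, h₁, m₁, sx₁, sf₁⟩ := hf
  obtain ⟨l₂, h₂, m₂, sx₂, sf₂⟩ := hg
  refine ⟨l₁ ++ l₂, by simp [h₁], ?_, ?_, ?_⟩
  · intro p hp; rcases List.mem_append.1 hp with h | h
    · exact m₁ p h
    · exact m₂ p h
  · simp [sx₁, sx₂]
  · simp [sf₁, sf₂]

lemma repSet_smul {T : ι → E →ₗ[ℝ] F} {W : ι → Set E} (hW : ∀ i, IsWedge (W i))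
    {c : ℝ} (hc : 0 ≤ c) {x : E} {f : F}
    (hf : f ∈ repSet T W x) : c • f ∈ repSet T W (c • x) := by
  obtain ⟨l, hne, hmem, hsx, hsf⟩ := hf
  refine ⟨l.map fun p => (p.1, c • p.2), by simpa using hne, ?_, ?_, ?_⟩
  · intro p hp
    obtain ⟨q, hq, rfl⟩ := List.mem_map.1 hp
    exact (hW q.1).2.2 c hc q.2 (hmem q hq)
  · rw [List.map_map]
    rw [← hsx, List.smul_sum, List.map_map]
    rfl
  · rw [List.map_map]
    rw [← hsf, List.smul_sum, List.map_map]
    congr 1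
    exact List.map_congr_left fun p _ => by simp

lemma sum_fin_map_get {M : Type*} [AddCommMonoid M] {α : Type*} (l : List α) (f : α → M) :
    ∑ i : Fin l.length, f (l.get i) = (l.map f).sum := by
  induction l with
  | nil => simp
  | cons a t ih => simp [Fin.sum_univ_succ, ih]

lemma repSet_decomp {𝒲 : Set (Set E)} (h𝒲 : ∀ Wm ∈ 𝒲, IsWedge Wm) (hRDP : HasRDP2 𝒲)
    {T : ι → E →ₗ[ℝ] F} {W : ι → Set E} (hWi : ∀ i, W i ∈ 𝒲)
    {x y : E} (hx : (repSet T W x).Nonempty) (hy : (repSet T W y).Nonempty)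
    {f : F} (hf : f ∈ repSet T W (x + y)) :
    ∃ g ∈ repSet T W x, ∃ h ∈ repSet T W y, f = g + h := by
  classical
  obtain ⟨l, hlne, hlmem, hlsum, hlf⟩ := hf
  obtain ⟨gx, lx, hlxne, hlxmem, hlxsum, hlxg⟩ := hx
  obtain ⟨gy, ly, hlyne, hlymem, hlysum, hlyg⟩ := hy
  set m₁ := l.length with hm₁
  set m₂ := lx.length with hm₂
  set m₃ := ly.length with hm₃
  set P : Fin (m₁ + m₂ + m₃) → ι × E :=
    Fin.append (Fin.append l.get lx.get) ly.get with hP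
  set Wfin : Fin (m₁ + m₂ + m₃) → Set E := fun j => W (P j).1 with hWfin
  set yfin : Fin (m₁ + m₂ + m₃) → E :=
    Fin.append (Fin.append (fun k => (l.get k).2) fun _ => (0:E)) (fun _ => (0:E)) with hyfin
  have hWmem : ∀ j, Wfin j ∈ 𝒲 := fun j => hWi _
  have hW0 : ∀ j, (0:E) ∈ Wfin j := fun j => wedge_zero_mem_s14 (h𝒲 _ (hWmem j))
  have hymem : ∀ j, yfin j ∈ Wfin j := by
    intro j
    refine Fin.addCases (fun i => ?_) (fun i => ?_) j
    · refine Fin.addCases (fun k => ?_) (fun k => ?_) i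
      · simpa [hyfin, hWfin, hP, Fin.append_left] using hlmem _ (l.get_mem k)
      · simpa [hyfin, hP, Fin.append_left, Fin.append_right] using hW0 _
    · simpa [hyfin, hP, Fin.append_right] using hW0 _
  have hsum : x + y = ∑ j, yfin j := by
    rw [hyfin, Fin.sum_univ_add, Fin.sum_univ_add]
    simp only [Fin.append_left, Fin.append_right, Finset.sum_const_zero, add_zero]
    rw [show (fun k : Fin m₁ => (l.get k).2) = fun k => Prod.snd (l.get k) from rfl,
      sum_fin_map_get, hlsum]
  have hxw : x ∈ wedgeSum Wfin := by
    refine ⟨lx.map Prod.snd, by simpa using hlxne, ?_, hlxsum⟩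
    intro v hv
    obtain ⟨p, hp, rfl⟩ := List.mem_map.1 hv
    obtain ⟨k, hk⟩ := List.mem_iff_get.1 hp
    refine Set.mem_iUnion.2 ⟨Fin.castAdd m₃ (Fin.natAdd m₁ k), ?_⟩
    subst hk
    simpa [hWfin, hP, Fin.append_left, Fin.append_right] using hlxmem _ (lx.get_mem k)
  have hyw : y ∈ wedgeSum Wfin := by
    refine ⟨ly.map Prod.snd, by simpa using hlyne, ?_, hlysum⟩
    intro v hv
    obtain ⟨p, hp, rfl⟩ := List.mem_map.1 hv
    obtain ⟨k, hk⟩ := List.mem_iff_get.1 hp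
    refine Set.mem_iUnion.2 ⟨Fin.natAdd (m₁ + m₂) k, ?_⟩
    subst hk
    simpa [hWfin, hP, Fin.append_right] using hlymem _ (ly.get_mem k)
  obtain ⟨z₁, z₂, hz₁, hz₂, hx1, hx2, hyz⟩ :=
    hRDP (m₁ + m₂ + m₃) Wfin hWmem x y hxw hyw yfin hymem hsum
  have hne : m₁ + m₂ + m₃ ≠ 0 := by
    have : 0 < m₁ := List.length_pos_iff.2 hlne
    omega
  have mem_of : ∀ (z : Fin (m₁ + m₂ + m₃) → E), (∀ j, z j ∈ Wfin j) → ∀ w : E,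
      w = ∑ j, z j → (∑ j, T (P j).1 (z j)) ∈ repSet T W w := by
    intro z hz w hw
    refine ⟨List.ofFn (fun j => ((P j).1, z j)), ?_, ?_, ?_, ?_⟩
    · rw [Ne, List.ofFn_eq_nil_iff]; exact hne
    · intro p hp
      obtain ⟨j, rfl⟩ := List.mem_ofFn.1 hp
      exact hz j
    · rw [List.map_ofFn, List.sum_ofFn]
      exact hw.symm
    · rw [List.map_ofFn, List.sum_ofFn]
      rfl
  refine ⟨∑ j, T (P j).1 (z₁ j), mem_of z₁ hz₁ x hx1,
          ∑ j, T (P j).1 (z₂ j), mem_of z₂ hz₂ y hx2, ?_⟩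
  have key : ∀ j, T (P j).1 (yfin j) = T (P j).1 (z₁ j) + T (P j).1 (z₂ j) := by
    intro j; rw [hyz j, map_add]
  calc f = (l.map fun p => T p.1 p.2).sum := hlf.symm
    _ = ∑ k : Fin m₁, T (l.get k).1 (l.get k).2 := (sum_fin_map_get l (fun p => T p.1 p.2)).symm
    _ = ∑ j, T (P j).1 (yfin j) := by
        rw [Fin.sum_univ_add, Fin.sum_univ_add]
        simp [hP, hyfin, Fin.append_left, Fin.append_right]
    _ = (∑ j, T (P j).1 (z₁ j)) + ∑ j, T (P j).1 (z₂ j) := by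
        simp only [key]
        rw [Finset.sum_add_distrib]

lemma exists_wedge_proj (V : Set F) (hV : IsWedge V) :
    ∃ proj : F →ₗ[ℝ] F, (∀ v, v ∈ V → -v ∈ V → proj v = 0) ∧
      ∀ v, proj v - v ∈ V ∧ v - proj v ∈ V := by
  classical
  set L : Submodule ℝ F := {
    carrier := {v | v ∈ V ∧ -v ∈ V}
    add_mem' := fun {a b} ha hb =>
      ⟨hV.2.1 _ ha.1 _ hb.1, by rw [neg_add]; exact hV.2.1 _ ha.2 _ hb.2⟩
    zero_mem' := ⟨wedge_zero_mem_s14 hV, by simpa using wedge_zero_mem_s14 hV⟩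
    smul_mem' := by
      intro c v hv
      rcases le_or_gt 0 c with hc | hc
      · exact ⟨hV.2.2 c hc v hv.1, by rw [← smul_neg]; exact hV.2.2 c hc _ hv.2⟩
      · refine ⟨?_, ?_⟩
        · rw [show c • v = (-c) • (-v) by simp]
          exact hV.2.2 _ (by linarith) _ hv.2
        · rw [show -(c • v) = (-c) • v by simp]
          exact hV.2.2 _ (by linarith) _ hv.1 } with hL
  obtain ⟨Q, hQ⟩ := Submodule.exists_isCompl L
  refine ⟨Q.subtype ∘ₗ Q.linearProjOfIsCompl L hQ.symm, ?_, ?_⟩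
  · intro v h1 h2
    have hv : v ∈ L := ⟨h1, h2⟩
    have h0 : (Q.linearProjOfIsCompl L hQ.symm) v = 0 :=
      Submodule.linearProjOfIsCompl_apply_right hQ.symm ⟨v, hv⟩
    simp [LinearMap.comp_apply, h0]
  · intro v
    have hv : v ∈ Q ⊔ L := by rw [hQ.symm.sup_eq_top]; exact Submodule.mem_top
    obtain ⟨a, ha, b, hb, hab⟩ := Submodule.mem_sup.1 hv
    have hpa : (Q.linearProjOfIsCompl L hQ.symm) a = ⟨a, ha⟩ :=
      Submodule.linearProjOfIsCompl_apply_left hQ.symm ⟨a, ha⟩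
    have hpb : (Q.linearProjOfIsCompl L hQ.symm) b = 0 :=
      Submodule.linearProjOfIsCompl_apply_right hQ.symm ⟨b, hb⟩
    have hPv : (Q.subtype ∘ₗ Q.linearProjOfIsCompl L hQ.symm) v = a := by
      rw [← hab]
      simp [LinearMap.comp_apply, map_add, hpa, hpb]
    constructor
    · rw [hPv, show a - v = -b by rw [← hab]; abel]
      exact hb.2
    · rw [hPv, show v - a = b by rw [← hab]; abel]
      exact hb.1

end AuxLemmas

theorem stmt_14 {E F ι : Type*} [AddCommGroup E] [Module ℝ E] [AddCommGroup F] [Module ℝ F]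
    (𝒲 : Set (Set E)) (h𝒲ne : 𝒲.Nonempty) (h𝒲 : ∀ W ∈ 𝒲, IsWedge W)
    (hRDP : HasRDP2 𝒲)
    (V : Set F) (hV : IsWedge V)
    (hDC : ∀ A : Set F, A.Nonempty → (∃ u, ∀ a ∈ A, u - a ∈ V) →
      ∃ z, (∀ a ∈ A, z - a ∈ V) ∧ ∀ u, (∀ a ∈ A, u - a ∈ V) → u - z ∈ V)
    (T : ι → E →ₗ[ℝ] F) (W : ι → Set E) (hWi : ∀ i, W i ∈ 𝒲)
    (S : E →ₗ[ℝ] F) (hS : ∀ i, ∀ x ∈ W i, (S - T i) x ∈ V) :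
    ∃ R : E →ₗ[ℝ] F,
      IsMultiSup T (fun i => {U : E →ₗ[ℝ] F | ∀ x ∈ W i, U x ∈ V}) R := by
  classical
  rcases isEmpty_or_nonempty ι with hι | hι
  · exact ⟨0, fun i => isEmptyElim i, fun u _ i => isEmptyElim i⟩
  obtain ⟨i₀⟩ := hι
  have hW : ∀ i, IsWedge (W i) := fun i => h𝒲 _ (hWi i)
  have hVadd : ∀ {a b : F}, a ∈ V → b ∈ V → a + b ∈ V := fun ha hb => hV.2.1 _ ha _ hb
  obtain ⟨proj, hproj0, hprojsub⟩ := exists_wedge_proj V hV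
  set A : E → Set F := repSet T W with hA
  have hSb : ∀ x : E, ∀ f ∈ A x, S x - f ∈ V := fun x f hf =>
    repSet_bound hV S (fun i w hw => by simpa [LinearMap.sub_apply] using hS i w hw) hf
  have key : ∀ x : E, (A x).Nonempty → ∃ zx, (∀ a ∈ A x, zx - a ∈ V) ∧
      ∀ u, (∀ a ∈ A x, u - a ∈ V) → u - zx ∈ V :=
    fun x hx => hDC (A x) hx ⟨S x, fun a ha => hSb x a ha⟩
  choose z hub hlb using key
  have huniq : ∀ x (hx : (A x).Nonempty) (w : F), (∀ a ∈ A x, w - a ∈ V) →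
      (∀ u, (∀ a ∈ A x, u - a ∈ V) → u - w ∈ V) → proj w = proj (z x hx) := by
    intro x hx w hw hwl
    have h1 : w - z x hx ∈ V := hlb x hx w hw
    have h2 : z x hx - w ∈ V := hwl (z x hx) (hub x hx)
    have h3 : proj (w - z x hx) = 0 := hproj0 _ h1 (by simpa using h2)
    rw [map_sub] at h3
    exact sub_eq_zero.1 h3
  have hcongr : ∀ u v, u = v → ∀ (hu : (A u).Nonempty) (hv : (A v).Nonempty),
      z u hu = z v hv := by
    rintro u v rfl hu hv; rfl
  have hC0 : (A 0).Nonempty := ⟨T i₀ 0, repSet_single (wedge_zero_mem_s14 (hW i₀))⟩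
  have hCadd : ∀ {x y : E}, (A x).Nonempty → (A y).Nonempty → (A (x + y)).Nonempty := by
    rintro x y ⟨f, hf⟩ ⟨g, hg⟩
    exact ⟨f + g, repSet_add hf hg⟩
  have hCsmul : ∀ (c : ℝ), 0 ≤ c → ∀ {x : E}, (A x).Nonempty → (A (c • x)).Nonempty := by
    rintro c hc x ⟨f, hf⟩
    exact ⟨c • f, repSet_smul hW hc hf⟩
  have hadd : ∀ x (hx : (A x).Nonempty) y (hy : (A y).Nonempty) (h : (A (x + y)).Nonempty),
      proj (z (x + y) h) = proj (z x hx) + proj (z y hy) := by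
    intro x hx y hy h
    have hubxy : ∀ a ∈ A (x + y), (z x hx + z y hy) - a ∈ V := by
      intro a ha
      obtain ⟨g, hg, k, hk, rfl⟩ := repSet_decomp h𝒲 hRDP hWi hx hy ha
      have h' := hVadd (hub x hx g hg) (hub y hy k hk)
      convert h' using 1
      abel
    have hlbxy : ∀ u, (∀ a ∈ A (x + y), u - a ∈ V) → u - (z x hx + z y hy) ∈ V := by
      intro u hu
      have step1 : ∀ g ∈ A x, (u - z y hy) - g ∈ V := by
        intro g hg
        have s0 : ∀ a ∈ A y, (u - g) - a ∈ V := by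
          intro a ha
          have := hu (g + a) (repSet_add hg ha)
          convert this using 1
          abel
        have := hlb y hy (u - g) s0
        convert this using 1
        abel
      have := hlb x hx (u - z y hy) step1
      convert this using 1
      abel
    have h4 := huniq (x + y) h _ hubxy hlbxy
    rw [← h4, map_add]
  have hsmul : ∀ (c : ℝ), 0 < c → ∀ x (hx : (A x).Nonempty) (h : (A (c • x)).Nonempty),
      proj (z (c • x) h) = c • proj (z x hx) := by
    intro c hc x hx h
    have hc' : (0:ℝ) ≤ c := le_of_lt hc
    have hubc : ∀ a ∈ A (c • x), c • z x hx - a ∈ V := by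
      intro a ha
      have ha' : c⁻¹ • a ∈ A x := by
        have := repSet_smul hW (by positivity : (0:ℝ) ≤ c⁻¹) ha
        rwa [smul_smul, inv_mul_cancel₀ (ne_of_gt hc), one_smul] at this
      have := hV.2.2 c hc' _ (hub x hx _ ha')
      rwa [smul_sub, smul_smul, mul_inv_cancel₀ (ne_of_gt hc), one_smul] at this
    have hlbc : ∀ u, (∀ a ∈ A (c • x), u - a ∈ V) → u - c • z x hx ∈ V := by
      intro u hu
      have s0 : ∀ g ∈ A x, c⁻¹ • u - g ∈ V := by
        intro g hg
        have := hV.2.2 c⁻¹ (by positivity) _ (hu (c • g) (repSet_smul hW hc' hg))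
        rwa [smul_sub, smul_smul, inv_mul_cancel₀ (ne_of_gt hc), one_smul] at this
      have := hV.2.2 c hc' _ (hlb x hx _ s0)
      rwa [smul_sub, smul_smul, mul_inv_cancel₀ (ne_of_gt hc), one_smul] at this
    have h4 := huniq (c • x) h _ hubc hlbc
    rw [← h4, map_smul]
  have hzero : proj (z 0 hC0) = 0 := by
    have hub0 : ∀ a ∈ A 0, (0:F) - a ∈ V := by
      intro a ha
      have := hSb 0 a ha
      simpa using this
    have hlb0 : ∀ u, (∀ a ∈ A 0, u - a ∈ V) → u - 0 ∈ V := by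
      intro u hu
      simpa using hu (T i₀ 0) (repSet_single (wedge_zero_mem_s14 (hW i₀)))
    have h4 := huniq 0 hC0 0 hub0 hlb0
    rw [← h4, map_zero]
  set D : Submodule ℝ E := {
    carrier := {x | ∃ a, (A a).Nonempty ∧ ∃ b, (A b).Nonempty ∧ x = a - b}
    add_mem' := by
      rintro u v ⟨a, ha, b, hb, rfl⟩ ⟨a', ha', b', hb', rfl⟩
      exact ⟨a + a', hCadd ha ha', b + b', hCadd hb hb', by abel⟩
    zero_mem' := ⟨0, hC0, 0, hC0, by simp⟩
    smul_mem' := by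
      rintro c u ⟨a, ha, b, hb, rfl⟩
      rcases le_or_gt 0 c with hc | hc
      · exact ⟨c • a, hCsmul c hc ha, c • b, hCsmul c hc hb, by rw [smul_sub]⟩
      · refine ⟨(-c) • b, hCsmul _ (by linarith) hb, (-c) • a, hCsmul _ (by linarith) ha, ?_⟩
        rw [smul_sub]
        simp only [neg_smul]
        abel } with hD
  have hdec : ∀ d : D, ∃ a, (A a).Nonempty ∧ ∃ b, (A b).Nonempty ∧ (d : E) = a - b :=
    fun d => d.2
  choose da hda db hdb hdab using hdec
  have hwd : ∀ x (hx : (A x).Nonempty) y (hy : (A y).Nonempty)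
      x' (hx' : (A x').Nonempty) y' (hy' : (A y').Nonempty), x - y = x' - y' →
      proj (z x hx) - proj (z y hy) = proj (z x' hx') - proj (z y' hy') := by
    intro x hx y hy x' hx' y' hy' hxy
    have he : x + y' = x' + y := sub_eq_sub_iff_add_eq_add.1 hxy
    have h1 : (A (x + y')).Nonempty := hCadd hx hy'
    have h2 : (A (x' + y)).Nonempty := hCadd hx' hy
    have e1 := hadd x hx y' hy' h1
    have e2 := hadd x' hx' y hy h2
    have e3 : z (x + y') h1 = z (x' + y) h2 := hcongr _ _ he h1 h2
    rw [e3, e2] at e1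
    rw [sub_eq_sub_iff_add_eq_add]
    exact e1.symm
  set RD : D → F := fun d => proj (z (da d) (hda d)) - proj (z (db d) (hdb d)) with hRD
  have hRDwd : ∀ (d : D) x (hx : (A x).Nonempty) y (hy : (A y).Nonempty),
      (d : E) = x - y → RD d = proj (z x hx) - proj (z y hy) := by
    intro d x hx y hy h
    exact hwd _ (hda d) _ (hdb d) x hx y hy (by rw [← h]; exact (hdab d).symm)
  have hRDadd : ∀ d e : D, RD (d + e) = RD d + RD e := by
    intro d e
    have h1 : ((d + e : D) : E) = (da d + da e) - (db d + db e) := by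
      rw [Submodule.coe_add, hdab d, hdab e]; abel
    rw [hRDwd (d + e) _ (hCadd (hda d) (hda e)) _ (hCadd (hdb d) (hdb e)) h1,
      hadd _ (hda d) _ (hda e), hadd _ (hdb d) _ (hdb e), hRD]
    beta_reduce
    abel
  have hRDsmul : ∀ (c : ℝ) (d : D), RD (c • d) = c • RD d := by
    intro c d
    rcases lt_trichotomy c 0 with hc | hc | hc
    · have h1 : ((c • d : D) : E) = (-c) • db d - (-c) • da d := by
        rw [Submodule.coe_smul, hdab d, smul_sub]
        simp only [neg_smul]
        abel
      rw [hRDwd _ _ (hCsmul _ (by linarith) (hdb d)) _ (hCsmul _ (by linarith) (hda d)) h1,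
        hsmul _ (by linarith) _ (hdb d), hsmul _ (by linarith) _ (hda d), hRD]
      simp only [neg_smul, smul_sub]
      abel
    · subst hc
      have h1 : (((0:ℝ) • d : D) : E) = 0 - 0 := by simp
      have h2 := hRDwd ((0:ℝ) • d) 0 hC0 0 hC0 h1
      rw [h2, hzero]
      simp
    · have h1 : ((c • d : D) : E) = c • da d - c • db d := by
        rw [Submodule.coe_smul, hdab d, smul_sub]
      rw [hRDwd _ _ (hCsmul _ (le_of_lt hc) (hda d)) _ (hCsmul _ (le_of_lt hc) (hdb d)) h1,
        hsmul _ hc _ (hda d), hsmul _ hc _ (hdb d), hRD, smul_sub]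
  set RL : D →ₗ[ℝ] F := { toFun := RD, map_add' := hRDadd, map_smul' := hRDsmul } with hRL
  obtain ⟨D', hDc⟩ := Submodule.exists_isCompl D
  set R : E →ₗ[ℝ] F := RL ∘ₗ (D.linearProjOfIsCompl D' hDc) with hR
  have hRapp : ∀ (x : E) (hx : x ∈ D), R x = RD ⟨x, hx⟩ := by
    intro x hx
    have h0 : (D.linearProjOfIsCompl D' hDc) x = ⟨x, hx⟩ :=
      Submodule.linearProjOfIsCompl_apply_left hDc ⟨x, hx⟩
    rw [hR, LinearMap.comp_apply, h0]
    rfl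
  have hwCs : ∀ i, ∀ w ∈ W i, (A w).Nonempty := fun i w hw => ⟨T i w, repSet_single hw⟩
  have hRw : ∀ i, ∀ w (hw : w ∈ W i), R w = proj (z w (hwCs i w hw)) := by
    intro i w hw
    have hwD : w ∈ D := ⟨w, hwCs i w hw, 0, hC0, (sub_zero w).symm⟩
    rw [hRapp w hwD, hRDwd ⟨w, hwD⟩ w (hwCs i w hw) 0 hC0 (sub_zero w).symm, hzero, sub_zero]
  refine ⟨R, ?_, ?_⟩
  · intro i
    intro w hw
    have h1 : proj (z w (hwCs i w hw)) - z w (hwCs i w hw) ∈ V := (hprojsub _).1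
    have h2 : z w (hwCs i w hw) - T i w ∈ V := hub w (hwCs i w hw) _ (repSet_single hw)
    have heq : (R - T i) w = (proj (z w (hwCs i w hw)) - z w (hwCs i w hw)) +
        (z w (hwCs i w hw) - T i w) := by
      rw [LinearMap.sub_apply, hRw i w hw]
      abel
    rw [heq]
    exact hVadd h1 h2
  · intro U hU i
    intro w hw
    have hUb : ∀ j, ∀ v ∈ W j, U v - T j v ∈ V := by
      intro j v hv
      have := hU j v hv
      simpa [LinearMap.sub_apply] using this
    have h1 : U w - z w (hwCs i w hw) ∈ V :=
      hlb w (hwCs i w hw) (U w) (fun a ha => repSet_bound hV U hUb ha)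
    have h2 : z w (hwCs i w hw) - proj (z w (hwCs i w hw)) ∈ V := (hprojsub _).2
    have heq : (U - R) w = (U w - z w (hwCs i w hw)) +
        (z w (hwCs i w hw) - proj (z w (hwCs i w hw))) := by
      rw [LinearMap.sub_apply, hRw i w hw]
      abel
    rw [heq]
    exact hVadd h1 h2
end

section
/- Let E be a real vector space with a nonempty collection 𝒲 of wedges having the (2,n)-Riesz decomposition property for every n ∈ ℕ. Let F be a real vector space partially ordered by a cone V such that every nonempty subset of F that is bounded above has a supremum. Let (T_i)_{i∈I} be linear maps E → F and (W_i)_{i∈I} wedges in 𝒲 such that ∑_{i∈I} W_i is generating in E and there exists a linear map S : E → F with (S − T_i)(W_i) ⊆ V for all i ∈ I. Then the family (T_i, L_{W_i,V}(E,F))_{i∈I} has a unique multi-supremum R in L(E,F), and for every x ∈ ∑_{i∈I} W_i, R(x) = sup { ∑_{i∈I} T_i(y_i) : y_i ∈ W_i for all i, only finitely many y_i nonzero, ∑_{i∈I} y_i = x }, the supremum taken in the partial order induced by V. -/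
open scoped Pointwise

namespace Stmt15Aux

variable {E F ι : Type*} [AddCommGroup E] [Module ℝ E] [AddCommGroup F] [Module ℝ F]

/-- The set of values `∑ T p.1 p.2` over all finite decompositions of `x` into
elements of the wedges. -/
def deco (T : ι → E →ₗ[ℝ] F) (W : ι → Set E) (x : E) : Set F :=
  {f | ∃ L : List (ι × E), (∀ p ∈ L, p.2 ∈ W p.1) ∧ (L.map Prod.snd).sum = x ∧
      (L.map fun p => T p.1 p.2).sum = f}

lemma sum_sub_sum {α : Type*} (f g : α → F) (l : List α) :
    (l.map f).sum - (l.map g).sum = (l.map fun a => f a - g a).sum := by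
  induction l with
  | nil => simp
  | cons a l ih =>
    simp only [List.map_cons, List.sum_cons, ← ih]
    abel

lemma wedge_zero {V : Set F} (hV : IsWedge V) : (0 : F) ∈ V := by
  obtain ⟨x, hx⟩ := hV.1
  simpa using hV.2.2 0 le_rfl x hx

lemma list_sum_mem {V : Set F} (hV : IsWedge V) {l : List F} (h : ∀ a ∈ l, a ∈ V) :
    l.sum ∈ V := by
  induction l with
  | nil => simpa using wedge_zero hV
  | cons a l ih =>
    simp only [List.sum_cons]
    exact hV.2.1 _ (h a (List.mem_cons_self)) _
      (ih fun b hb => h b (List.mem_cons_of_mem _ hb))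

lemma antisym {V : Set F} (hcone : V ∩ (-V) = {0}) {a : F} (h1 : a ∈ V) (h2 : -a ∈ V) :
    a = 0 := by
  have : a ∈ V ∩ (-V) := ⟨h1, by simpa [Set.mem_neg] using h2⟩
  rw [hcone] at this
  exact this

end Stmt15Aux

open Stmt15Aux in
theorem stmt_15 {E F ι : Type*} [AddCommGroup E] [Module ℝ E] [AddCommGroup F] [Module ℝ F]
    (𝒲 : Set (Set E)) (h𝒲ne : 𝒲.Nonempty) (h𝒲 : ∀ W ∈ 𝒲, IsWedge W)
    (hRDP : HasRDP2 𝒲)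
    (V : Set F) (hV : IsWedge V) (hcone : V ∩ (-V) = {0})
    (hDC : ∀ A : Set F, A.Nonempty → (∃ u, ∀ a ∈ A, u - a ∈ V) →
      ∃ z, (∀ a ∈ A, z - a ∈ V) ∧ ∀ u, (∀ a ∈ A, u - a ∈ V) → u - z ∈ V)
    (T : ι → E →ₗ[ℝ] F) (W : ι → Set E) (hWi : ∀ i, W i ∈ 𝒲)
    (hgen : wedgeSum W - wedgeSum W = Set.univ)
    (S : E →ₗ[ℝ] F) (hS : ∀ i, ∀ x ∈ W i, (S - T i) x ∈ V) :
    (∃! R : E →ₗ[ℝ] F,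
      IsMultiSup T (fun i => {U : E →ₗ[ℝ] F | ∀ x ∈ W i, U x ∈ V}) R) ∧
    ∀ R : E →ₗ[ℝ] F,
      IsMultiSup T (fun i => {U : E →ₗ[ℝ] F | ∀ x ∈ W i, U x ∈ V}) R →
      ∀ x ∈ wedgeSum W,
        (∀ f ∈ {f : F | ∃ y : ι →₀ E, (∀ i, y i ∈ W i) ∧ (y.sum fun _ v => v) = x ∧
            f = y.sum fun i v => (T i) v}, R x - f ∈ V) ∧
        (∀ u : F, (∀ f ∈ {f : F | ∃ y : ι →₀ E, (∀ i, y i ∈ W i) ∧ (y.sum fun _ v => v) = x ∧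
            f = y.sum fun i v => (T i) v}, u - f ∈ V) → u - R x ∈ V) := by
  classical
  -- basic facts about the wedges
  have hWw : ∀ i, IsWedge (W i) := fun i => h𝒲 _ (hWi i)
  have hW0 : ∀ i, (0 : E) ∈ W i := fun i => wedge_zero (hWw i)
  have hVadd : ∀ {a b : F}, a ∈ V → b ∈ V → a + b ∈ V := fun ha hb => hV.2.1 _ ha _ hb
  -- ι is nonempty
  obtain ⟨i₀⟩ : Nonempty ι := by
    have h0 : (0 : E) ∈ wedgeSum W - wedgeSum W := by rw [hgen]; trivial
    rw [Set.mem_sub] at h0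
    obtain ⟨p, hp, q, hq, -⟩ := h0
    obtain ⟨l, hl, hmem, -⟩ := hp
    match l, hl with
    | a :: l', _ =>
      obtain ⟨_, ⟨i, rfl⟩, -⟩ := hmem a (List.mem_cons_self)
      exact ⟨i⟩
  have h0ws : (0 : E) ∈ wedgeSum W := by
    refine ⟨[0], by simp, ?_, by simp⟩
    intro y hy
    simp only [List.mem_singleton] at hy
    subst hy
    exact Set.mem_iUnion.2 ⟨i₀, hW0 i₀⟩
  have hws_add : ∀ {x y : E}, x ∈ wedgeSum W → y ∈ wedgeSum W → x + y ∈ wedgeSum W := by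
    rintro x y ⟨l, hl, hmem, rfl⟩ ⟨l', hl', hmem', rfl⟩
    refine ⟨l ++ l', by simp [hl], ?_, by simp⟩
    intro z hz
    rcases List.mem_append.1 hz with h | h
    · exact hmem z h
    · exact hmem' z h
  -- decomposition lists for elements of the wedge sum
  have hws_deco : ∀ x ∈ wedgeSum W, ∃ L : List (ι × E), L ≠ [] ∧
      (∀ p ∈ L, p.2 ∈ W p.1) ∧ (L.map Prod.snd).sum = x := by
    rintro x ⟨l, hlne, hmem, rfl⟩
    have hch : ∀ y ∈ l, ∃ i, y ∈ W i := fun y hy => Set.mem_iUnion.1 (hmem y hy)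
    refine ⟨l.attach.map (fun y => ((hch y.1 y.2).choose, y.1)), ?_, ?_, ?_⟩
    · simpa using hlne
    · intro p hp
      simp only [List.mem_map] at hp
      obtain ⟨y, hy, rfl⟩ := hp
      exact (hch y.1 y.2).choose_spec
    · rw [List.map_map]
      have : (Prod.snd ∘ fun y : {y // y ∈ l} => ((hch y.1 y.2).choose, y.1)) =
          fun y : {y // y ∈ l} => y.1 := rfl
      rw [this]
      simp
  have hdeco_ws : ∀ (L : List (ι × E)), (∀ p ∈ L, p.2 ∈ W p.1) →
      (L.map Prod.snd).sum ∈ wedgeSum W := by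
    intro L hL
    rcases eq_or_ne L [] with rfl | hne
    · simpa using h0ws
    · refine ⟨L.map Prod.snd, by simpa using hne, ?_, rfl⟩
      intro y hy
      simp only [List.mem_map] at hy
      obtain ⟨p, hp, rfl⟩ := hy
      exact Set.mem_iUnion.2 ⟨p.1, hL p hp⟩
  have hdne : ∀ x ∈ wedgeSum W, (deco T W x).Nonempty := by
    intro x hx
    obtain ⟨L, _, hL, hLs⟩ := hws_deco x hx
    exact ⟨_, L, hL, hLs, rfl⟩
  -- S x is an upper bound of deco T W x
  have hSub : ∀ x : E, ∀ a ∈ deco T W x, S x - a ∈ V := by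
    rintro x a ⟨L, hL, hLs, rfl⟩
    have hx : S x = (L.map fun p => S p.2).sum := by
      rw [← hLs, map_list_sum S, List.map_map]
      rfl
    rw [hx, sum_sub_sum]
    apply list_sum_mem hV
    intro b hb
    simp only [List.mem_map] at hb
    obtain ⟨p, hp, rfl⟩ := hb
    simpa [LinearMap.sub_apply] using hS p.1 p.2 (hL p hp)
  -- the supremum function r on the wedge sum
  have hsup' : ∀ x : E, ∃ z : F, x ∈ wedgeSum W →
      (∀ a ∈ deco T W x, z - a ∈ V) ∧ ∀ u, (∀ a ∈ deco T W x, u - a ∈ V) → u - z ∈ V := by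
    intro x
    by_cases hx : x ∈ wedgeSum W
    · obtain ⟨z, h⟩ := hDC _ (hdne x hx) ⟨S x, fun a ha => hSub x a ha⟩
      exact ⟨z, fun _ => h⟩
    · exact ⟨0, fun h => absurd h hx⟩
  choose r hr using hsup'
  -- uniqueness of least upper bounds
  have hlub_uniq : ∀ (A : Set F) (z z' : F),
      (∀ a ∈ A, z - a ∈ V) → (∀ u, (∀ a ∈ A, u - a ∈ V) → u - z ∈ V) →
      (∀ a ∈ A, z' - a ∈ V) → (∀ u, (∀ a ∈ A, u - a ∈ V) → u - z' ∈ V) → z = z' := by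
    intro A z z' h1 h2 h1' h2'
    have a1 : z' - z ∈ V := h2 z' h1'
    have a2 : z - z' ∈ V := h2' z h1
    have := antisym hcone a2 (by simpa using a1)
    exact sub_eq_zero.1 this
  -- the RDP splitting of decompositions
  have hsplit : ∀ x1 x2 : E, x1 ∈ wedgeSum W → x2 ∈ wedgeSum W →
      ∀ a ∈ deco T W (x1 + x2), ∃ b1 ∈ deco T W x1, ∃ b2 ∈ deco T W x2, a = b1 + b2 := by
    rintro x1 x2 hx1 hx2 a ⟨L, hL, hLs, rfl⟩
    obtain ⟨L1, hL1ne, hL1, hL1s⟩ := hws_deco x1 hx1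
    obtain ⟨L2, hL2ne, hL2, hL2s⟩ := hws_deco x2 hx2
    set M : List (ι × E) := L ++ (L1 ++ L2).map (fun p => (p.1, (0 : E))) with hM
    have hMel : ∀ p ∈ M, p.2 ∈ W p.1 := by
      intro p hp
      rw [hM, List.mem_append] at hp
      rcases hp with h | h
      · exact hL p h
      · simp only [List.mem_map] at h
        obtain ⟨q, -, rfl⟩ := h
        exact hW0 q.1
    have hyW : ∀ j : Fin M.length, (M.get j).2 ∈ W (M.get j).1 :=
      fun j => hMel _ (M.get_mem j)
    have hofn_snd : (List.ofFn fun j : Fin M.length => (M.get j).2) = M.map Prod.snd :=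
      List.ofFn_getElem_eq_map M Prod.snd
    have htail0 : (((L1 ++ L2).map (fun p : ι × E => (p.1, (0 : E)))).map Prod.snd).sum
        = (0 : E) := by
      apply List.sum_eq_zero
      intro v hv
      simp only [List.mem_map] at hv
      obtain ⟨p, ⟨q, -, rfl⟩, rfl⟩ := hv
      rfl
    have hsum_y : x1 + x2 = ∑ j : Fin M.length, (M.get j).2 := by
      rw [← List.sum_ofFn, hofn_snd, hM, List.map_append, List.sum_append, hLs, htail0,
        add_zero]
    have hmemM : ∀ p ∈ L1 ++ L2, ∃ j : Fin M.length, (M.get j).1 = p.1 := by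
      intro p hp
      have hpM : (p.1, (0 : E)) ∈ M := by
        rw [hM]
        exact List.mem_append_right _ (List.mem_map.2 ⟨p, hp, rfl⟩)
      obtain ⟨j, hj⟩ := List.get_of_mem hpM
      exact ⟨j, by rw [hj]⟩
    have hx1' : x1 ∈ wedgeSum (fun j : Fin M.length => W (M.get j).1) := by
      refine ⟨L1.map Prod.snd, by simpa using hL1ne, ?_, hL1s⟩
      intro v hv
      simp only [List.mem_map] at hv
      obtain ⟨p, hp, rfl⟩ := hv
      obtain ⟨j, hj⟩ := hmemM p (List.mem_append_left _ hp)
      exact Set.mem_iUnion.2 ⟨j, by rw [hj]; exact hL1 p hp⟩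
    have hx2' : x2 ∈ wedgeSum (fun j : Fin M.length => W (M.get j).1) := by
      refine ⟨L2.map Prod.snd, by simpa using hL2ne, ?_, hL2s⟩
      intro v hv
      simp only [List.mem_map] at hv
      obtain ⟨p, hp, rfl⟩ := hv
      obtain ⟨j, hj⟩ := hmemM p (List.mem_append_right _ hp)
      exact Set.mem_iUnion.2 ⟨j, by rw [hj]; exact hL2 p hp⟩
    obtain ⟨z1, z2, hz1, hz2, hz1s, hz2s, hzsum⟩ :=
      hRDP M.length (fun j => W (M.get j).1) (fun j => hWi _) x1 x2 hx1' hx2'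
        (fun j => (M.get j).2) hyW hsum_y
    refine ⟨∑ j, T (M.get j).1 (z1 j), ?_, ∑ j, T (M.get j).1 (z2 j), ?_, ?_⟩
    · refine ⟨List.ofFn (fun j => ((M.get j).1, z1 j)), ?_, ?_, ?_⟩
      · intro p hp
        rw [List.mem_ofFn] at hp
        obtain ⟨j, rfl⟩ := hp
        exact hz1 j
      · rw [List.map_ofFn]
        exact (List.sum_ofFn).trans hz1s.symm
      · rw [List.map_ofFn]
        exact List.sum_ofFn
    · refine ⟨List.ofFn (fun j => ((M.get j).1, z2 j)), ?_, ?_, ?_⟩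
      · intro p hp
        rw [List.mem_ofFn] at hp
        obtain ⟨j, rfl⟩ := hp
        exact hz2 j
      · rw [List.map_ofFn]
        exact (List.sum_ofFn).trans hz2s.symm
      · rw [List.map_ofFn]
        exact List.sum_ofFn
    · have h1 : ∑ j, T (M.get j).1 (z1 j) + ∑ j, T (M.get j).1 (z2 j)
          = ∑ j : Fin M.length, T (M.get j).1 (M.get j).2 := by
        rw [← Finset.sum_add_distrib]
        exact Finset.sum_congr rfl fun j _ => by rw [← map_add, ← hzsum j]
      have h2 : (List.ofFn fun j : Fin M.length => T (M.get j).1 (M.get j).2)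
          = M.map (fun p => T p.1 p.2) := List.ofFn_getElem_eq_map M (fun p => T p.1 p.2)
      have h3 : ∑ j : Fin M.length, T (M.get j).1 (M.get j).2
          = (M.map fun p => T p.1 p.2).sum := by
        rw [← h2, List.sum_ofFn]
      have h4 : (((L1 ++ L2).map (fun p : ι × E => (p.1, (0 : E)))).map
          (fun p : ι × E => T p.1 p.2)).sum = (0 : F) := by
        apply List.sum_eq_zero
        intro v hv
        simp only [List.mem_map] at hv
        obtain ⟨p, ⟨q, -, rfl⟩, rfl⟩ := hv
        simp
      rw [h1, h3, hM, List.map_append, List.sum_append, h4, add_zero]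
  -- additivity of r
  have hradd : ∀ x1 x2 : E, x1 ∈ wedgeSum W → x2 ∈ wedgeSum W →
      r (x1 + x2) = r x1 + r x2 := by
    intro x1 x2 h1 h2
    have h12 : x1 + x2 ∈ wedgeSum W := hws_add h1 h2
    obtain ⟨hub12, hl12⟩ := hr _ h12
    obtain ⟨hub1, hl1⟩ := hr _ h1
    obtain ⟨hub2, hl2⟩ := hr _ h2
    apply hlub_uniq (deco T W (x1 + x2)) _ _ hub12 hl12
    · intro a ha
      obtain ⟨b1, hb1, b2, hb2, rfl⟩ := hsplit x1 x2 h1 h2 a ha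
      have h := hVadd (hub1 b1 hb1) (hub2 b2 hb2)
      have heq : r x1 - b1 + (r x2 - b2) = r x1 + r x2 - (b1 + b2) := by abel
      rwa [heq] at h
    · intro u hu
      have hcat : ∀ b1 ∈ deco T W x1, ∀ b2 ∈ deco T W x2, b1 + b2 ∈ deco T W (x1 + x2) := by
        rintro b1 ⟨K1, hk1, hk1s, rfl⟩ b2 ⟨K2, hk2, hk2s, rfl⟩
        refine ⟨K1 ++ K2, ?_, ?_, ?_⟩
        · intro p hp
          rcases List.mem_append.1 hp with h | h
          · exact hk1 p h
          · exact hk2 p h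
        · rw [List.map_append, List.sum_append, hk1s, hk2s]
        · rw [List.map_append, List.sum_append]
      have step1 : ∀ b1 ∈ deco T W x1, u - r x2 - b1 ∈ V := by
        intro b1 hb1
        have h := hl2 (u - b1) (fun b2 hb2 => by
          have := hu _ (hcat b1 hb1 b2 hb2)
          rwa [← sub_sub] at this)
        rwa [sub_right_comm] at h
      have step2 : u - r x2 - r x1 ∈ V := hl1 _ step1
      have heq : u - r x2 - r x1 = u - (r x1 + r x2) := by abel
      rwa [heq] at step2
  -- r 0 = 0
  have hr0 : r 0 = 0 := by
    have h0d : (0 : F) ∈ deco T W 0 := ⟨[], by simp, by simp, by simp⟩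
    obtain ⟨hub0, hl0⟩ := hr 0 h0ws
    have z1 : (0 : F) - r 0 ∈ V := by
      apply hl0
      intro a ha
      have := hSub 0 a ha
      simpa using this
    have z2 : r 0 - 0 ∈ V := hub0 0 h0d
    have := antisym hcone z2 (by simpa using z1)
    simpa using this
  -- scaling of decompositions
  have hsm_deco : ∀ c : ℝ, 0 < c → ∀ x : E, ∀ b ∈ deco T W x, c • b ∈ deco T W (c • x) := by
    rintro c hc x b ⟨L, hL, hLs, rfl⟩
    refine ⟨L.map (fun p => (p.1, c • p.2)), ?_, ?_, ?_⟩
    · intro p hp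
      simp only [List.mem_map] at hp
      obtain ⟨q, hq, rfl⟩ := hp
      exact (hWw q.1).2.2 c hc.le _ (hL q hq)
    · rw [List.map_map, ← hLs, List.smul_sum, List.map_map]
      rfl
    · rw [List.map_map, List.smul_sum, List.map_map]
      congr 1
      apply List.map_congr_left
      intro p _
      exact map_smul (T p.1) c p.2
  have hws_smul : ∀ c : ℝ, 0 ≤ c → ∀ x ∈ wedgeSum W, c • x ∈ wedgeSum W := by
    rintro c hc x ⟨l, hl, hmem, rfl⟩
    rcases hc.eq_or_lt with rfl | hc'
    · simpa using h0ws
    · refine ⟨l.map (c • ·), by simpa using hl, ?_, by rw [← List.smul_sum]⟩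
      intro y hy
      simp only [List.mem_map] at hy
      obtain ⟨z, hz, rfl⟩ := hy
      obtain ⟨_, ⟨i, rfl⟩, hzi⟩ := hmem z hz
      exact Set.mem_iUnion.2 ⟨i, (hWw i).2.2 c hc _ hzi⟩
  -- positive homogeneity of r
  have hrsm : ∀ c : ℝ, 0 ≤ c → ∀ x ∈ wedgeSum W, r (c • x) = c • r x := by
    intro c hc0 x hx
    rcases hc0.eq_or_lt with rfl | hc
    · simpa [hr0] using hr0
    · have hcx : c • x ∈ wedgeSum W := hws_smul c hc0 x hx
      obtain ⟨hubc, hlc⟩ := hr _ hcx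
      obtain ⟨hub, hl⟩ := hr _ hx
      apply hlub_uniq (deco T W (c • x)) _ _ hubc hlc
      · intro a ha
        have h1 : c⁻¹ • a ∈ deco T W x := by
          have := hsm_deco c⁻¹ (by positivity) _ a ha
          rwa [inv_smul_smul₀ hc.ne'] at this
        have h2 : c • (r x - c⁻¹ • a) ∈ V := hV.2.2 c hc0 _ (hub _ h1)
        rwa [smul_sub, smul_inv_smul₀ hc.ne'] at h2
      · intro u hu
        have hub' : ∀ b ∈ deco T W x, c⁻¹ • u - b ∈ V := by
          intro b hb
          have h := hu _ (hsm_deco c hc x b hb)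
          have h2 : c⁻¹ • (u - c • b) ∈ V := hV.2.2 c⁻¹ (by positivity) _ h
          rwa [smul_sub, inv_smul_smul₀ hc.ne'] at h2
        have h := hV.2.2 c hc0 _ (hl _ hub')
        rwa [smul_sub, smul_inv_smul₀ hc.ne'] at h
  -- decompose arbitrary elements of E
  have hdecE : ∀ x : E, ∃ p, p ∈ wedgeSum W ∧ ∃ q, q ∈ wedgeSum W ∧ x = p - q := by
    intro x
    have hx : x ∈ wedgeSum W - wedgeSum W := by rw [hgen]; trivial
    rw [Set.mem_sub] at hx
    obtain ⟨p, hp, q, hq, h⟩ := hx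
    exact ⟨p, hp, q, hq, h.symm⟩
  choose P hP Q hQ hPQ using hdecE
  have hRchar : ∀ x p q : E, p ∈ wedgeSum W → q ∈ wedgeSum W → x = p - q →
      r (P x) - r (Q x) = r p - r q := by
    intro x p q hp hq hx
    rw [sub_eq_sub_iff_add_eq_add, ← hradd _ _ (hP x) hq, ← hradd _ _ hp (hQ x)]
    congr 1
    have h1 : P x - Q x = p - q := by rw [← hPQ x, hx]
    exact sub_eq_sub_iff_add_eq_add.1 h1
  -- the linear extension R
  have hadd' : ∀ x y : E, r (P (x + y)) - r (Q (x + y))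
      = (r (P x) - r (Q x)) + (r (P y) - r (Q y)) := by
    intro x y
    have hx : x + y = (P x + P y) - (Q x + Q y) := by
      conv_lhs => rw [hPQ x, hPQ y]
      abel
    rw [hRchar (x + y) _ _ (hws_add (hP x) (hP y)) (hws_add (hQ x) (hQ y)) hx,
      hradd _ _ (hP x) (hP y), hradd _ _ (hQ x) (hQ y)]
    abel
  have hsmul' : ∀ (c : ℝ) (x : E), r (P (c • x)) - r (Q (c • x))
      = c • (r (P x) - r (Q x)) := by
    intro c x
    rcases le_or_gt 0 c with hc | hc
    · have hx : c • x = c • P x - c • Q x := by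
        conv_lhs => rw [hPQ x]
        rw [smul_sub]
      rw [hRchar (c • x) _ _ (hws_smul c hc _ (hP x)) (hws_smul c hc _ (hQ x)) hx,
        hrsm c hc _ (hP x), hrsm c hc _ (hQ x), smul_sub]
    · have hc' : (0 : ℝ) ≤ -c := by linarith
      have hx : c • x = (-c) • Q x - (-c) • P x := by
        conv_lhs => rw [hPQ x]
        rw [smul_sub, neg_smul, neg_smul]
        abel
      rw [hRchar (c • x) _ _ (hws_smul _ hc' _ (hQ x)) (hws_smul _ hc' _ (hP x)) hx,
        hrsm _ hc' _ (hQ x), hrsm _ hc' _ (hP x), smul_sub, neg_smul, neg_smul]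
      abel
  set R : E →ₗ[ℝ] F :=
    { toFun := fun x => r (P x) - r (Q x)
      map_add' := hadd'
      map_smul' := hsmul' } with hRdef
  have hRapp : ∀ x : E, R x = r (P x) - r (Q x) := fun x => rfl
  have hRr : ∀ x ∈ wedgeSum W, R x = r x := by
    intro x hx
    rw [hRapp, hRchar x x 0 hx h0ws (by rw [sub_zero]), hr0, sub_zero]
  -- membership facts
  have hWsubws : ∀ i, ∀ x ∈ W i, x ∈ wedgeSum W := by
    intro i x hx
    refine ⟨[x], by simp, ?_, by simp⟩
    intro y hy
    simp only [List.mem_singleton] at hy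
    subst hy
    exact Set.mem_iUnion.2 ⟨i, hx⟩
  have hTmem : ∀ i, ∀ x ∈ W i, T i x ∈ deco T W x := by
    intro i x hx
    exact ⟨[(i, x)], by simpa using hx, by simp, by simp⟩
  -- R is a multi-upper bound
  have hRub : IsMultiUpperBound T (fun i => {U : E →ₗ[ℝ] F | ∀ x ∈ W i, U x ∈ V}) R := by
    intro i
    intro x hx
    rw [LinearMap.sub_apply, hRr x (hWsubws i x hx)]
    exact (hr x (hWsubws i x hx)).1 _ (hTmem i x hx)
  -- least upper bound property of R on the wedge sum
  have hRleast : ∀ u : E →ₗ[ℝ] F,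
      IsMultiUpperBound T (fun i => {U : E →ₗ[ℝ] F | ∀ x ∈ W i, U x ∈ V}) u →
      ∀ x ∈ wedgeSum W, u x - R x ∈ V := by
    intro u hu x hx
    rw [hRr x hx]
    apply (hr x hx).2
    rintro a ⟨L, hL, hLs, rfl⟩
    have hux : u x = (L.map fun p => u p.2).sum := by
      rw [← hLs, map_list_sum u, List.map_map]
      rfl
    rw [hux, sum_sub_sum]
    apply list_sum_mem hV
    intro b hb
    simp only [List.mem_map] at hb
    obtain ⟨p, hp, rfl⟩ := hb
    simpa [LinearMap.sub_apply] using hu p.1 p.2 (hL p hp)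
  have hRsup : IsMultiSup T (fun i => {U : E →ₗ[ℝ] F | ∀ x ∈ W i, U x ∈ V}) R := by
    refine ⟨hRub, fun u hu i => ?_⟩
    intro x hx
    rw [LinearMap.sub_apply]
    exact hRleast u hu x (hWsubws i x hx)
  -- uniqueness
  have huniqR : ∀ R' : E →ₗ[ℝ] F,
      IsMultiSup T (fun i => {U : E →ₗ[ℝ] F | ∀ x ∈ W i, U x ∈ V}) R' → R' = R := by
    intro R' hR'
    have hag : ∀ x ∈ wedgeSum W, R' x = R x := by
      intro x hx
      have h2' : R x - R' x ∈ V := by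
        obtain ⟨L, hLne, hL, hLs⟩ := hws_deco x hx
        have hx2 : R x - R' x = (L.map fun p => R p.2 - R' p.2).sum := by
          rw [← hLs, map_list_sum R, map_list_sum R', List.map_map, List.map_map,
            sum_sub_sum]
          rfl
        rw [hx2]
        apply list_sum_mem hV
        intro b hb
        simp only [List.mem_map] at hb
        obtain ⟨p, hp, rfl⟩ := hb
        simpa [LinearMap.sub_apply] using hR'.2 R hRub p.1 p.2 (hL p hp)
      have h1' : R' x - R x ∈ V := hRleast R' hR'.1 x hx
      have := antisym hcone h1' (by simpa using h2')
      exact sub_eq_zero.1 this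
    apply LinearMap.ext
    intro x
    conv_lhs => rw [hPQ x]
    conv_rhs => rw [hPQ x]
    rw [map_sub, map_sub, hag _ (hP x), hag _ (hQ x)]
  -- equality of the finsupp description with deco
  have hseteq : ∀ x : E, {f : F | ∃ y : ι →₀ E, (∀ i, y i ∈ W i) ∧ (y.sum fun _ v => v) = x ∧
      f = y.sum fun i v => (T i) v} = deco T W x := by
    intro x
    ext f
    constructor
    · rintro ⟨y, hy, hysum, rfl⟩
      refine ⟨y.support.toList.map (fun i => (i, y i)), ?_, ?_, ?_⟩
      · intro p hp
        simp only [List.mem_map] at hp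
        obtain ⟨i, hi, rfl⟩ := hp
        exact hy i
      · rw [List.map_map]
        have : (Prod.snd ∘ fun i : ι => (i, y i)) = fun i => y i := rfl
        rw [this, Finset.sum_map_toList]
        exact hysum
      · rw [List.map_map]
        have : ((fun p : ι × E => T p.1 p.2) ∘ fun i : ι => (i, y i))
            = fun i => T i (y i) := rfl
        rw [this, Finset.sum_map_toList]
        rfl
    · rintro ⟨L, hL, hLs, rfl⟩
      have key : ∀ L : List (ι × E), (∀ p ∈ L, p.2 ∈ W p.1) →
          ∃ y : ι →₀ E, (∀ i, y i ∈ W i) ∧ (y.sum fun _ v => v) = (L.map Prod.snd).sum ∧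
            (y.sum fun i v => T i v) = (L.map fun p => T p.1 p.2).sum := by
        intro L
        induction L with
        | nil => exact fun _ => ⟨0, by simp [hW0], by simp, by simp⟩
        | cons p L ih =>
          intro hmem
          obtain ⟨y, hy1, hy2, hy3⟩ := ih (fun q hq => hmem q (List.mem_cons_of_mem _ hq))
          refine ⟨Finsupp.single p.1 p.2 + y, ?_, ?_, ?_⟩
          · intro i
            rw [Finsupp.add_apply, Finsupp.single_apply]
            by_cases h : p.1 = i
            · subst h
              rw [if_pos rfl]
              exact (hWw p.1).2.1 _ (hmem p (List.mem_cons_self)) _ (hy1 p.1)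
            · rw [if_neg h, zero_add]
              exact hy1 i
          · rw [Finsupp.sum_add_index' (fun _ => rfl) (fun _ _ _ => rfl),
              Finsupp.sum_single_index rfl, hy2]
            simp
          · rw [Finsupp.sum_add_index' (fun a => map_zero (T a))
              (fun a b₁ b₂ => map_add (T a) b₁ b₂),
              Finsupp.sum_single_index (h := fun a => ⇑(T a)) (map_zero (T p.1)), hy3]
            simp
      obtain ⟨y, h1, h2, h3⟩ := key L hL
      exact ⟨y, h1, by rw [h2, hLs], h3.symm⟩
  -- conclusion
  refine ⟨⟨R, hRsup, fun R' h => huniqR R' h⟩, ?_⟩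
  intro R' hR' x hx
  have hR'R : R' = R := huniqR R' hR'
  subst hR'R
  rw [hseteq x]
  obtain ⟨hub, hl⟩ := hr x hx
  rw [hRr x hx]
  exact ⟨hub, hl⟩
end

section
/- Let E be a real vector space with a nonempty collection 𝒲 of wedges having the (2,n)-Riesz decomposition property for every n ∈ ℕ. Let (W_i)_{i∈I} be wedges in 𝒲 with ∑_{i∈I} W_i generating in E, and let (φ_i)_{i∈I} be linear functionals on E such that there exists a linear functional ψ₀ on E with (ψ₀ − φ_i)(x) ≥ 0 for all x ∈ W_i and all i ∈ I. Then the family (φ_i, W_i′)_{i∈I} in the algebraic dual E′ (with W_i′ the dual wedge of W_i) has a unique multi-supremum ψ, and for every x ∈ ∑_{i∈I} W_i, ψ(x) = sup { ∑_{i∈I} φ_i(y_i) : y_i ∈ W_i for all i, only finitely many y_i nonzero, ∑_{i∈I} y_i = x }, the supremum taken in ℝ. -/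
set_option linter.unusedSectionVars false

section Aux
variable {E ι : Type*} [AddCommGroup E] [Module ℝ E] {W : ι → Set E} {φ : ι → E →ₗ[ℝ] ℝ}

def dSet (W : ι → Set E) (φ : ι → E →ₗ[ℝ] ℝ) (x : E) : Set ℝ :=
  {r : ℝ | ∃ y : ι →₀ E, (∀ i, y i ∈ W i) ∧ (y.sum fun _ v => v) = x ∧
    r = y.sum fun i v => (φ i) v}

lemma wedge_zero {w : Set E} (h : IsWedge w) : (0:E) ∈ w := by
  obtain ⟨x, hx⟩ := h.1
  simpa using h.2.2 0 le_rfl x hx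

lemma exists_finsupp (h0 : ∀ i, (0:E) ∈ W i) (hW : ∀ i, IsWedge (W i)) {x : E}
    (hx : x ∈ wedgeSum W) :
    ∃ y : ι →₀ E, (∀ i, y i ∈ W i) ∧ (y.sum fun _ v => v) = x := by
  obtain ⟨l, -, hl, hsum⟩ := hx
  subst hsum
  induction l with
  | nil => exact ⟨0, fun i => by simpa using h0 i, by simp⟩
  | cons a l ih =>
    obtain ⟨y, hy, hys⟩ := ih (fun b hb => hl b (List.mem_cons_of_mem _ hb))
    obtain ⟨_, ⟨i, rfl⟩, hi⟩ := hl a List.mem_cons_self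
    refine ⟨Finsupp.single i a + y, ?_, ?_⟩
    · intro j
      rcases eq_or_ne i j with rfl | hne
      · simpa [Finsupp.single_apply] using (hW i).2.1 a hi (y i) (hy i)
      · simpa [Finsupp.single_apply, hne] using hy j
    · rw [Finsupp.sum_add_index' (fun _ => rfl) (fun _ _ _ => rfl),
        Finsupp.sum_single_index rfl, hys, List.sum_cons]

lemma mem_wedgeSum_fin {n : ℕ} (hn : n ≠ 0) {V : Fin n → Set E} (g : Fin n → E)
    (hg : ∀ j, g j ∈ V j) : (∑ j, g j) ∈ wedgeSum V := by
  refine ⟨(List.finRange n).map g, ?_, ?_, ?_⟩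
  · simp [List.finRange_eq_nil_iff, hn]
  · intro y hy
    obtain ⟨j, -, rfl⟩ := List.mem_map.1 hy
    exact Set.mem_iUnion.2 ⟨j, hg j⟩
  · rw [Fin.sum_univ_def]

lemma finsupp_sum_equiv {n : ℕ} {T : Finset ι} (e : Fin n ≃ T) (y : ι →₀ E)
    (hs : y.support ⊆ T) {M : Type*} [AddCommMonoid M] (h : ι → E → M)
    (h0 : ∀ i, h i 0 = 0) :
    (y.sum h) = ∑ j, h (e j) (y (e j)) := by
  rw [Finsupp.sum_of_support_subset y hs h (fun i _ => h0 i),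
    ← Finset.sum_coe_sort T (fun i => h i (y i))]
  exact (Fintype.sum_equiv e _ _ (fun j => rfl)).symm

lemma exists_finsupp_of_fin {n : ℕ} {T : Finset ι} (e : Fin n ≃ T)
    (h0 : ∀ i, (0:E) ∈ W i) (φ : ι → E →ₗ[ℝ] ℝ) (z : Fin n → E)
    (hz : ∀ j, z j ∈ W (e j)) :
    ∃ Y : ι →₀ E, (∀ i, Y i ∈ W i) ∧ (Y.sum fun _ v => v) = ∑ j, z j ∧
      (Y.sum fun i v => (φ i) v) = ∑ j, (φ (e j)) (z j) := by
  classical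
  set g : ι → E := fun i => if h : i ∈ T then z (e.symm ⟨i, h⟩) else 0 with hg
  have hgsupp : ∀ i, g i ≠ 0 → i ∈ T := by
    intro i hi
    by_contra h
    exact hi (by simp [hg, h])
  refine ⟨Finsupp.onFinset T g hgsupp, ?_, ?_, ?_⟩
  · intro i
    show g i ∈ W i
    by_cases h : i ∈ T
    · have h1 := hz (e.symm ⟨i, h⟩)
      rw [e.apply_symm_apply] at h1
      simpa [hg, h] using h1
    · simpa [hg, h] using h0 i
  all_goals {
    rw [finsupp_sum_equiv e _ (Finsupp.support_onFinset_subset) _ (by simp)]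
    refine Finset.sum_congr rfl fun j _ => ?_
    have hYj : (Finsupp.onFinset T g hgsupp) (e j) = z j := by
      show g (e j) = z j
      rw [hg]
      simp only [dif_pos (e j).2]
      congr 1
      rw [Subtype.coe_eta, e.symm_apply_apply]
    rw [hYj] }

lemma dSet_le {u : E →ₗ[ℝ] ℝ} (hu : ∀ i, ∀ v ∈ W i, 0 ≤ u v - (φ i) v) {x : E} {r : ℝ}
    (hr : r ∈ dSet W φ x) : r ≤ u x := by
  obtain ⟨y, hy, hsum, rfl⟩ := hr
  calc (y.sum fun i v => (φ i) v) ≤ y.sum fun _ v => u v := by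
        refine Finset.sum_le_sum fun i _ => ?_
        have := hu i (y i) (hy i); linarith
    _ = u (y.sum fun _ v => v) := (map_finsuppSum u y _).symm
    _ = u x := by rw [hsum]

lemma dSet_add {x₁ x₂ : E} {r₁ r₂ : ℝ} (hW : ∀ i, IsWedge (W i))
    (h₁ : r₁ ∈ dSet W φ x₁) (h₂ : r₂ ∈ dSet W φ x₂) :
    r₁ + r₂ ∈ dSet W φ (x₁ + x₂) := by
  obtain ⟨y₁, hy₁, hs₁, rfl⟩ := h₁
  obtain ⟨y₂, hy₂, hs₂, rfl⟩ := h₂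
  refine ⟨y₁ + y₂, fun i => ?_, ?_, ?_⟩
  · rw [Finsupp.add_apply]
    exact (hW i).2.1 _ (hy₁ i) _ (hy₂ i)
  · rw [Finsupp.sum_add_index' (fun _ => rfl) (fun _ _ _ => rfl), hs₁, hs₂]
  · rw [Finsupp.sum_add_index' (fun i => map_zero (φ i)) (fun i => map_add (φ i))]

lemma dSet_smul {x : E} {r : ℝ} {c : ℝ} (hc : 0 ≤ c) (hW : ∀ i, IsWedge (W i))
    (hr : r ∈ dSet W φ x) : c * r ∈ dSet W φ (c • x) := by
  obtain ⟨y, hy, hs, rfl⟩ := hr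
  refine ⟨c • y, fun i => ?_, ?_, ?_⟩
  · rw [Finsupp.smul_apply]
    exact (hW i).2.2 c hc _ (hy i)
  · rw [Finsupp.sum_smul_index' (fun _ => rfl)]
    rw [← hs, ← Finsupp.smul_sum]
  · rw [Finsupp.sum_smul_index' (fun i => map_zero (φ i))]
    simp_rw [map_smul, smul_eq_mul]
    rw [← smul_eq_mul, Finsupp.smul_sum]
    simp

end Aux

section Split
variable {E ι : Type*} [AddCommGroup E] [Module ℝ E] {W : ι → Set E} {φ : ι → E →ₗ[ℝ] ℝ}

lemma dSet_split (𝒲 : Set (Set E)) (hRDP : HasRDP2 𝒲)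
    (hWi : ∀ i, W i ∈ 𝒲) (hW : ∀ i, IsWedge (W i)) (h0 : ∀ i, (0:E) ∈ W i)
    {x₁ x₂ : E} (hx₁ : x₁ ∈ wedgeSum W) (hx₂ : x₂ ∈ wedgeSum W)
    {r : ℝ} (hr : r ∈ dSet W φ (x₁ + x₂)) :
    ∃ r₁ ∈ dSet W φ x₁, ∃ r₂ ∈ dSet W φ x₂, r = r₁ + r₂ := by
  classical
  obtain ⟨y, hy, hysum, hrval⟩ := hr
  obtain ⟨y₁, hy₁, hs₁⟩ := exists_finsupp h0 hW hx₁
  obtain ⟨y₂, hy₂, hs₂⟩ := exists_finsupp h0 hW hx₂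
  -- get an index
  have hι : Nonempty ι := by
    obtain ⟨l, hlne, hl, -⟩ := hx₁
    obtain ⟨a, ha⟩ := List.exists_mem_of_ne_nil l hlne
    obtain ⟨_, ⟨i, rfl⟩, -⟩ := hl a ha
    exact ⟨i⟩
  obtain ⟨i₀⟩ := hι
  set T : Finset ι := ((y.support ∪ y₁.support) ∪ y₂.support) ∪ {i₀} with hT
  have hyT : y.support ⊆ T := by intro i hi; simp only [hT, Finset.mem_union]; tauto
  have hy₁T : y₁.support ⊆ T := by intro i hi; simp only [hT, Finset.mem_union]; tauto
  have hy₂T : y₂.support ⊆ T := by intro i hi; simp only [hT, Finset.mem_union]; tauto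
  have hi₀T : i₀ ∈ T := by simp only [hT, Finset.mem_union, Finset.mem_singleton]; tauto
  set n := T.card with hn
  have hn0 : n ≠ 0 := by
    simp only [hn]
    exact Finset.card_ne_zero_of_mem hi₀T
  set e : Fin n ≃ T := T.equivFin.symm with he
  set V : Fin n → Set E := fun j => W (e j) with hV
  have hVmem : ∀ j, V j ∈ 𝒲 := fun j => hWi _
  have hx₁V : x₁ ∈ wedgeSum V := by
    have h1 : x₁ = ∑ j, y₁ (e j) :=
      hs₁ ▸ finsupp_sum_equiv e y₁ hy₁T _ (fun _ => rfl)
    rw [h1]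
    exact mem_wedgeSum_fin hn0 _ (fun j => hy₁ (e j))
  have hx₂V : x₂ ∈ wedgeSum V := by
    have h2 : x₂ = ∑ j, y₂ (e j) :=
      hs₂ ▸ finsupp_sum_equiv e y₂ hy₂T _ (fun _ => rfl)
    rw [h2]
    exact mem_wedgeSum_fin hn0 _ (fun j => hy₂ (e j))
  have hyeq : x₁ + x₂ = ∑ j, y (e j) :=
    hysum ▸ finsupp_sum_equiv e y hyT _ (fun _ => rfl)
  obtain ⟨z₁, z₂, hz₁, hz₂, hz₁s, hz₂s, hzsplit⟩ :=
    hRDP n V hVmem x₁ x₂ hx₁V hx₂V (fun j => y (e j)) (fun j => hy (e j)) hyeq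
  obtain ⟨Y₁, hY₁, hY₁s, hY₁v⟩ := exists_finsupp_of_fin e h0 φ z₁ hz₁
  obtain ⟨Y₂, hY₂, hY₂s, hY₂v⟩ := exists_finsupp_of_fin e h0 φ z₂ hz₂
  refine ⟨_, ⟨Y₁, hY₁, by rw [hY₁s, ← hz₁s], rfl⟩,
          _, ⟨Y₂, hY₂, by rw [hY₂s, ← hz₂s], rfl⟩, ?_⟩
  rw [hY₁v, hY₂v, hrval,
    finsupp_sum_equiv e y hyT (fun i v => (φ i) v) (fun i => map_zero (φ i))]
  rw [← Finset.sum_add_distrib]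
  refine Finset.sum_congr rfl fun j _ => ?_
  rw [hzsplit j, map_add]

end Split

open scoped Pointwise

theorem stmt_17 {E ι : Type*} [AddCommGroup E] [Module ℝ E]
    (𝒲 : Set (Set E)) (h𝒲ne : 𝒲.Nonempty) (h𝒲 : ∀ W ∈ 𝒲, IsWedge W)
    (hRDP : HasRDP2 𝒲)
    (W : ι → Set E) (hWi : ∀ i, W i ∈ 𝒲)
    (hgen : wedgeSum W - wedgeSum W = Set.univ)
    (φ : ι → E →ₗ[ℝ] ℝ)
    (ψ₀ : E →ₗ[ℝ] ℝ) (hψ₀ : ∀ i, ∀ x ∈ W i, 0 ≤ ψ₀ x - (φ i) x) :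
    (∃! ψ : E →ₗ[ℝ] ℝ,
      IsMultiSup φ (fun i => {ξ : E →ₗ[ℝ] ℝ | ∀ x ∈ W i, 0 ≤ ξ x}) ψ) ∧
    ∀ ψ : E →ₗ[ℝ] ℝ,
      IsMultiSup φ (fun i => {ξ : E →ₗ[ℝ] ℝ | ∀ x ∈ W i, 0 ≤ ξ x}) ψ →
      ∀ x ∈ wedgeSum W,
        IsLUB {r : ℝ | ∃ y : ι →₀ E, (∀ i, y i ∈ W i) ∧ (y.sum fun _ v => v) = x ∧
          r = y.sum fun i v => (φ i) v} (ψ x) := by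
  classical
  have hWedge : ∀ i, IsWedge (W i) := fun i => h𝒲 _ (hWi i)
  have h0 : ∀ i, (0:E) ∈ W i := fun i => wedge_zero (hWedge i)
  have hEx : ∀ u : E, ∃ a, a ∈ wedgeSum W ∧ ∃ b, b ∈ wedgeSum W ∧ a - b = u := by
    intro u
    have hu : u ∈ wedgeSum W - wedgeSum W := by rw [hgen]; trivial
    obtain ⟨a, ha, b, hb, hab⟩ := Set.mem_sub.1 hu
    exact ⟨a, ha, b, hb, hab⟩
  obtain ⟨a₀, ha₀S, -⟩ := hEx 0
  have hι : Nonempty ι := by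
    obtain ⟨l, hlne, hl, -⟩ := ha₀S
    obtain ⟨a, ha⟩ := List.exists_mem_of_ne_nil l hlne
    obtain ⟨_, ⟨i, rfl⟩, -⟩ := hl a ha
    exact ⟨i⟩
  obtain ⟨i₀⟩ := hι
  have h0S : (0:E) ∈ wedgeSum W := by
    refine ⟨[0], by simp, ?_, by simp⟩
    intro y hy
    simp only [List.mem_singleton] at hy
    subst hy
    exact Set.mem_iUnion.2 ⟨i₀, h0 i₀⟩
  have hSadd : ∀ {a b : E}, a ∈ wedgeSum W → b ∈ wedgeSum W → a + b ∈ wedgeSum W := by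
    rintro a b ⟨l₁, h₁, hl₁, rfl⟩ ⟨l₂, h₂, hl₂, rfl⟩
    refine ⟨l₁ ++ l₂, by simp [h₁], ?_, by rw [List.sum_append]⟩
    intro y hy
    rcases List.mem_append.1 hy with h | h
    exacts [hl₁ y h, hl₂ y h]
  have hSsmul : ∀ {c : ℝ}, 0 ≤ c → ∀ {a : E}, a ∈ wedgeSum W → c • a ∈ wedgeSum W := by
    rintro c hc a ⟨l, hne, hl, rfl⟩
    refine ⟨l.map (fun v => c • v), by simp [hne], ?_, ?_⟩
    · intro y hy
      obtain ⟨v, hv, rfl⟩ := List.mem_map.1 hy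
      obtain ⟨_, ⟨i, rfl⟩, hvi⟩ := hl v hv
      exact Set.mem_iUnion.2 ⟨i, (hWedge i).2.2 c hc v hvi⟩
    · rw [List.smul_sum]
  set D : E → Set ℝ := dSet W φ with hD
  set f : E → ℝ := fun x => sSup (D x) with hf
  have hDne : ∀ {x : E}, x ∈ wedgeSum W → (D x).Nonempty := by
    intro x hx
    obtain ⟨y, hy, hs⟩ := exists_finsupp h0 hWedge hx
    exact ⟨_, y, hy, hs, rfl⟩
  have hDbdd : ∀ x, BddAbove (D x) := fun x => ⟨ψ₀ x, fun r hr => dSet_le hψ₀ hr⟩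
  have hfle : ∀ {x : E} {r : ℝ}, r ∈ D x → r ≤ f x := fun {x r} hr => le_csSup (hDbdd x) hr
  have hfub : ∀ {u : E →ₗ[ℝ] ℝ}, (∀ i, ∀ v ∈ W i, 0 ≤ u v - (φ i) v) →
      ∀ {x : E}, x ∈ wedgeSum W → f x ≤ u x := by
    intro u hu x hx
    exact csSup_le (hDne hx) (fun r hr => dSet_le hu hr)
  have hfadd : ∀ {x₁ x₂ : E}, x₁ ∈ wedgeSum W → x₂ ∈ wedgeSum W →
      f (x₁ + x₂) = f x₁ + f x₂ := by
    intro x₁ x₂ h₁ h₂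
    refine le_antisymm ?_ ?_
    · refine csSup_le (hDne (hSadd h₁ h₂)) fun r hr => ?_
      obtain ⟨r₁, hr₁, r₂, hr₂, rfl⟩ := dSet_split 𝒲 hRDP hWi hWedge h0 h₁ h₂ hr
      have k1 := hfle hr₁
      have k2 := hfle hr₂
      linarith
    · have key : ∀ r₁ ∈ D x₁, ∀ r₂ ∈ D x₂, r₁ + r₂ ≤ f (x₁ + x₂) :=
        fun r₁ hr₁ r₂ hr₂ => hfle (dSet_add hWedge hr₁ hr₂)
      have h3 : f x₁ ≤ f (x₁ + x₂) - f x₂ := by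
        refine csSup_le (hDne h₁) fun r₁ hr₁ => ?_
        have h4 : f x₂ ≤ f (x₁ + x₂) - r₁ := csSup_le (hDne h₂) fun r₂ hr₂ => by
          have := key r₁ hr₁ r₂ hr₂; linarith
        linarith
      linarith
  have hf0 : f 0 = 0 := by
    have hmem : (0:ℝ) ∈ D 0 := ⟨0, fun i => by simpa using h0 i, by simp, by simp⟩
    refine le_antisymm ?_ (hfle hmem)
    simpa using hfub hψ₀ h0S
  have hfsmul : ∀ {c : ℝ}, 0 ≤ c → ∀ {x : E}, x ∈ wedgeSum W → f (c • x) = c * f x := by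
    intro c hc x hx
    rcases eq_or_lt_of_le hc with rfl | hc'
    · rw [zero_smul, hf0, zero_mul]
    · refine le_antisymm ?_ ?_
      · refine csSup_le (hDne (hSsmul hc hx)) fun r hr => ?_
        have h5 : c⁻¹ * r ∈ D x := by
          have := dSet_smul (le_of_lt (inv_pos.2 hc')) hWedge hr
          rwa [smul_smul, inv_mul_cancel₀ hc'.ne', one_smul] at this
        have h5' := hfle h5
        calc r = c * (c⁻¹ * r) := by field_simp
          _ ≤ c * f x := mul_le_mul_of_nonneg_left h5' hc
      · have h6 : f x ≤ c⁻¹ * f (c • x) := by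
          refine csSup_le (hDne hx) fun r hr => ?_
          have h6' := hfle (dSet_smul hc hWedge hr)
          calc r = c⁻¹ * (c * r) := by field_simp
            _ ≤ c⁻¹ * f (c • x) := mul_le_mul_of_nonneg_left h6' (inv_nonneg.2 hc)
        calc c * f x ≤ c * (c⁻¹ * f (c • x)) := mul_le_mul_of_nonneg_left h6 hc
          _ = f (c • x) := by field_simp
  choose A hA B hB hAB using hEx
  have hwd : ∀ {a b a' b' : E}, a ∈ wedgeSum W → b ∈ wedgeSum W → a' ∈ wedgeSum W →
      b' ∈ wedgeSum W → a - b = a' - b' → f a - f b = f a' - f b' := by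
    intro a b a' b' ha hb ha' hb' heq
    have h7 : a + b' = a' + b := sub_eq_sub_iff_add_eq_add.1 heq
    have h8 := hfadd ha hb'
    have h9 := hfadd ha' hb
    rw [h7, h9] at h8
    linarith
  set g : E → ℝ := fun u => f (A u) - f (B u) with hgdef
  have hgval : ∀ {a b : E}, a ∈ wedgeSum W → b ∈ wedgeSum W → g (a - b) = f a - f b := by
    intro a b ha hb
    exact hwd (hA _) (hB _) ha hb (hAB (a - b))
  have hgadd : ∀ u v : E, g (u + v) = g u + g v := by
    intro u v
    have h10 : (A u + A v) - (B u + B v) = u + v := by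
      calc A u + A v - (B u + B v) = (A u - B u) + (A v - B v) := by abel
        _ = u + v := by rw [hAB u, hAB v]
    rw [← h10, hgval (hSadd (hA u) (hA v)) (hSadd (hB u) (hB v)),
      hfadd (hA u) (hA v), hfadd (hB u) (hB v)]
    simp only [hgdef]
    ring
  have hgsmul : ∀ (c : ℝ) (u : E), g (c • u) = c * g u := by
    intro c u
    rcases le_or_gt 0 c with hc | hc
    · have h11 : c • A u - c • B u = c • u := by rw [← smul_sub, hAB u]
      rw [← h11, hgval (hSsmul hc (hA u)) (hSsmul hc (hB u)),
        hfsmul hc (hA u), hfsmul hc (hB u)]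
      simp only [hgdef]
      ring
    · have hc' : (0:ℝ) ≤ -c := by linarith
      have h11 : (-c) • B u - (-c) • A u = c • u := by
        have hstep : (-c) • (B u - A u) = c • (A u - B u) := by
          rw [smul_sub, smul_sub, neg_smul, neg_smul]; abel
        rw [← smul_sub, hstep, hAB u]
      rw [← h11, hgval (hSsmul hc' (hB u)) (hSsmul hc' (hA u)),
        hfsmul hc' (hB u), hfsmul hc' (hA u)]
      simp only [hgdef]
      ring
  set ψ : E →ₗ[ℝ] ℝ := IsLinearMap.mk' g ⟨hgadd, fun c u => by
    rw [hgsmul c u, smul_eq_mul]⟩ with hψdef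
  have hψapp : ∀ u : E, ψ u = g u := fun u => rfl
  have hψS : ∀ {x : E}, x ∈ wedgeSum W → ψ x = f x := by
    intro x hx
    have h12 := hgval hx h0S
    rw [sub_zero, hf0, sub_zero] at h12
    rw [hψapp, h12]
  have hxS_of_mem : ∀ {i : ι} {x : E}, x ∈ W i → x ∈ wedgeSum W := by
    intro i x hx
    refine ⟨[x], by simp, ?_, by simp⟩
    intro y hy
    simp only [List.mem_singleton] at hy
    subst hy
    exact Set.mem_iUnion.2 ⟨i, hx⟩
  have hφle : ∀ i, ∀ x ∈ W i, (φ i) x ≤ f x := by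
    intro i x hx
    refine hfle ⟨Finsupp.single i x, ?_, ?_, ?_⟩
    · intro j
      rcases eq_or_ne i j with rfl | hne
      · simpa [Finsupp.single_apply] using hx
      · simpa [Finsupp.single_apply, hne] using h0 j
    · rw [Finsupp.sum_single_index rfl]
    · exact (Finsupp.sum_single_index (h := fun j v => (φ j) v) (map_zero (φ i))).symm
  have hmub : IsMultiUpperBound φ (fun i => {ξ : E →ₗ[ℝ] ℝ | ∀ x ∈ W i, 0 ≤ ξ x}) ψ := by
    intro i x hx
    have h12 := hφle i x hx
    have h13 := hψS (hxS_of_mem hx)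
    simp only [LinearMap.sub_apply]
    linarith
  have hleast : ∀ u, IsMultiUpperBound φ (fun i => {ξ : E →ₗ[ℝ] ℝ | ∀ x ∈ W i, 0 ≤ ξ x}) u →
      ∀ i, u - ψ ∈ {ξ : E →ₗ[ℝ] ℝ | ∀ x ∈ W i, 0 ≤ ξ x} := by
    intro u hu i x hx
    have h14 : ∀ j, ∀ v ∈ W j, 0 ≤ u v - (φ j) v := by
      intro j v hv
      simpa [LinearMap.sub_apply] using hu j v hv
    have h15 := hfub h14 (hxS_of_mem hx)
    have h16 := hψS (hxS_of_mem hx)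
    simp only [LinearMap.sub_apply]
    linarith
  have hsup : IsMultiSup φ (fun i => {ξ : E →ₗ[ℝ] ℝ | ∀ x ∈ W i, 0 ≤ ξ x}) ψ := ⟨hmub, hleast⟩
  have huniq : ∀ ψ' : E →ₗ[ℝ] ℝ,
      IsMultiSup φ (fun i => {ξ : E →ₗ[ℝ] ℝ | ∀ x ∈ W i, 0 ≤ ξ x}) ψ' → ψ' = ψ := by
    intro ψ' hψ'
    have e1 : ∀ i, ∀ x ∈ W i, ψ' x = ψ x := by
      intro i x hx
      have a1 := hsup.2 ψ' hψ'.1 i x hx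
      have a2 := hψ'.2 ψ hmub i x hx
      simp only [LinearMap.sub_apply] at a1 a2
      linarith
    have e2 : ∀ x ∈ wedgeSum W, ψ' x = ψ x := by
      rintro x ⟨l, -, hl, rfl⟩
      rw [map_list_sum, map_list_sum]
      congr 1
      refine List.map_congr_left fun a ha => ?_
      obtain ⟨_, ⟨i, rfl⟩, hai⟩ := hl a ha
      exact e1 i a hai
    refine LinearMap.ext fun u => ?_
    rw [← hAB u, map_sub, map_sub, e2 _ (hA u), e2 _ (hB u)]
  refine ⟨⟨ψ, hsup, huniq⟩, ?_⟩
  intro ψ' hψ' x hx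
  rw [huniq ψ' hψ', hψS hx]
  exact isLUB_csSup (hDne hx) (hDbdd x)
end
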